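/- arXiv:2309.00689 — 4 statements merged into one kernel-verified Lean document; each statement's English description precedes it below -/
import Mathlib

section
/- Let $K$ be a complete discretely valued field with valuation ring $\mathcal{O}_K$, uniformizer $\pi$, and residue field $k$ of characteristic $\ne 2$. Let $q$ be a nondegenerate quadratic form over $K$, and write $q \simeq q_1 \perp \pi \cdot q_2$ where all diagonal entries of $q_1$ and $q_2$ are units in $\mathcal{O}_K$. Then $q$ is anisotropic and universal over $K$ if and only if both residue forms $\overline{q}_1, \overline{q}_2$ (obtained by reducing the unit entries modulo the maximal ideal) have positive dimension and are anisotropic and universal over $k$. -/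
open scoped Multiplicative ENNReal

/-- The diagonal quadratic form `⟨a i⟩` over the field `k`. -/
noncomputable def diagQF (k : Type*) [Field k] {ι : Type*} [Fintype ι] (a : ι → k) :
    QuadraticForm k (ι → k) :=
  QuadraticMap.weightedSumSquares k a

/-- A quadratic form is universal if it represents every nonzero element. -/
def QFUniversal {k M : Type*} [Field k] [AddCommGroup M] [Module k M]
    (q : QuadraticForm k M) : Prop :=
  ∀ a : k, a ≠ 0 → ∃ x, q x = a

/-- The set of dimensions of anisotropic universal (nondegenerate) quadratic forms over `k`;
every nondegenerate form over a field of characteristic `≠ 2` is isometric to a diagonal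
form with unit entries. -/
def AUSet (k : Type*) [Field k] : Set ℕ :=
  {n | ∃ a : Fin n → kˣ,
    (diagQF k fun i => (a i : k)).Anisotropic ∧ QFUniversal (diagQF k fun i => (a i : k))}

/-- The `m`-invariant: the minimal dimension of an anisotropic universal quadratic form
(`⊤` if there is none). -/
noncomputable def mInv (k : Type*) [Field k] : ℕ∞ :=
  sInf ((↑) '' AUSet k)

/-- The `u`-invariant: the maximal dimension of an anisotropic quadratic form
(`⊤` if there is no maximum). -/
noncomputable def uInv (k : Type*) [Field k] : ℕ∞ :=
  sSup ((↑) '' {n : ℕ | ∃ a : Fin n → kˣ, (diagQF k fun i => (a i : k)).Anisotropic})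

/-- `L` is a finitely generated field extension of transcendence degree one over `k`. -/
def IsOneVarFunctionField (k L : Type*) [Field k] [Field L] [Algebra k L] : Prop :=
  ∃ x : L, Transcendental k x ∧ FiniteDimensional ↥(IntermediateField.adjoin k {x}) L

universe u

/-- The strong `u`-invariant of `k`. -/
noncomputable def uS (k : Type u) [Field k] : ℝ≥0∞ :=
  sInf {n : ℝ≥0∞ |
    (∀ (k' : Type u) [Field k'] [Algebra k k'], FiniteDimensional k k' →
      (uInv k' : ℝ≥0∞) ≤ n) ∧
    (∀ (K' : Type u) [Field K'] [Algebra k K'], IsOneVarFunctionField k K' →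
      (uInv K' : ℝ≥0∞) ≤ 2 * n)}

/-- The strong `m`-invariant of `k`. -/
noncomputable def mS (k : Type u) [Field k] : ℝ≥0∞ :=
  sSup ((fun n : ℕ => (n : ℝ≥0∞)) ''
    {n : ℕ | ∀ (k' : Type u) [Field k'] [Algebra k k'], FiniteDimensional k k' →
      (n : ℕ∞) ≤ mInv k' ∧ ((2 * n : ℕ) : ℕ∞) ≤ mInv (RatFunc k')})

section Stmt0Aux

variable {O : Type*} [CommRing O] [IsDomain O] [IsDiscreteValuationRing O]

lemma aux_residue_ne_zero_iff {x : O} : IsLocalRing.residue O x ≠ 0 ↔ IsUnit x := by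
  rw [Ne, IsLocalRing.residue_eq_zero_iff, IsLocalRing.mem_maximalIdeal, mem_nonunits_iff,
    not_not]

lemma aux_two_isUnit (hchar : ringChar (IsLocalRing.ResidueField O) ≠ 2) : IsUnit (2 : O) :=
  aux_residue_ne_zero_iff.mp (by rw [map_ofNat]; exact Ring.two_ne_zero hchar)

/-- The value of a diagonal quadratic form, on the integral level. -/
def diagSum {n : ℕ} (b : Fin n → O) (x : Fin n → O) : O := ∑ i, b i * (x i * x i)

lemma residue_diagSum {n : ℕ} (b x : Fin n → O) :
    IsLocalRing.residue O (diagSum b x) =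
      diagQF (IsLocalRing.ResidueField O) (fun i => IsLocalRing.residue O (b i))
        (fun i => IsLocalRing.residue O (x i)) := by
  simp [diagSum, diagQF, map_sum, map_mul, smul_eq_mul]

lemma diagQF_eq_zero_of_isEmpty {k : Type*} [Field k] {n : ℕ} (hn : n = 0) (b : Fin n → k)
    (x : Fin n → k) : diagQF k b x = 0 := by
  subst hn
  simp [diagQF]

end Stmt0Aux
section Stmt0Aux2

variable {O : Type*} [CommRing O] [IsDomain O] [IsDiscreteValuationRing O]

lemma aux_isUnit_of_sub_mem {a b : O} (h : a - b ∈ IsLocalRing.maximalIdeal O)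
    (hb : IsUnit b) : IsUnit a := by
  rw [← aux_residue_ne_zero_iff] at hb ⊢
  have : IsLocalRing.residue O a = IsLocalRing.residue O b := by
    rwa [← sub_eq_zero, ← map_sub, IsLocalRing.residue_eq_zero_iff]
  rwa [this]

lemma hensel_diagSum [IsAdicComplete (IsLocalRing.maximalIdeal O) O]
    (h2 : IsUnit (2 : O)) {n : ℕ} (b : Fin n → Oˣ) (x : Fin n → O) (i : Fin n)
    (hxi : IsUnit (x i)) (c : O)
    (hc : diagSum (fun i => (b i : O)) x - c ∈ IsLocalRing.maximalIdeal O) :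
    ∃ y : Fin n → O, IsUnit (y i) ∧ diagSum (fun i => (b i : O)) y = c := by
  classical
  set A : O := ∑ j ∈ Finset.univ.erase i, (b j : O) * (x j * x j) with hA
  have hsplit : diagSum (fun i => (b i : O)) x = (b i : O) * (x i * x i) + A := by
    rw [diagSum, ← Finset.add_sum_erase _ _ (Finset.mem_univ i)]
  set c₀ : O := ((b i)⁻¹ : Oˣ) * (A - c) with hc₀
  set f : Polynomial O := Polynomial.X ^ 2 + Polynomial.C c₀ with hf
  have hmonic : f.Monic := Polynomial.monic_X_pow_add_C _ (by norm_num)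
  have heval : ∀ t : O, f.eval t = t * t + c₀ := by
    intro t; simp [hf, sq, Polynomial.eval_add, Polynomial.eval_pow]
  have key : (b i : O) * Polynomial.eval (x i) f
      = diagSum (fun i => (b i : O)) x - c := by
    rw [heval, hsplit, hc₀, mul_add, Units.mul_inv_cancel_left]
    ring
  have hmem : f.eval (x i) ∈ IsLocalRing.maximalIdeal O := by
    have h1 : Polynomial.eval (x i) f
        = ((b i)⁻¹ : Oˣ) * ((b i : O) * Polynomial.eval (x i) f) :=
      (Units.inv_mul_cancel_left _ _).symm
    rw [h1, key]
    exact Ideal.mul_mem_left _ _ hc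
  have hderiv : IsUnit (Ideal.Quotient.mk (IsLocalRing.maximalIdeal O)
      (Polynomial.eval (x i) (Polynomial.derivative f))) := by
    have hd : Polynomial.derivative f = Polynomial.C 2 * Polynomial.X := by
      simp [hf, Polynomial.derivative_X_pow]
      rw [← Polynomial.C_1, ← Polynomial.C_add, one_add_one_eq_two]
    rw [hd]
    simp only [Polynomial.eval_mul, Polynomial.eval_C, Polynomial.eval_X]
    exact (h2.mul hxi).map _
  obtain ⟨a, ha, hsub⟩ := HenselianRing.is_henselian (I := IsLocalRing.maximalIdeal O)
    f hmonic (x i) hmem hderiv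
  have haroot : a * a + c₀ = 0 := by rw [← heval]; exact ha
  have hbi : (b i : O) * (a * a) = c - A := by
    have : a * a = -c₀ := by linear_combination haroot
    rw [this, hc₀, mul_neg, Units.mul_inv_cancel_left]
    ring
  refine ⟨Function.update x i a, ?_, ?_⟩
  · rw [Function.update_self]
    exact aux_isUnit_of_sub_mem hsub hxi
  · have hupdate : diagSum (fun i => (b i : O)) (Function.update x i a)
        = (b i : O) * (a * a) + A := by
      rw [diagSum, ← Finset.add_sum_erase _ _ (Finset.mem_univ i), Function.update_self]
      congr 1
      exact Finset.sum_congr rfl fun j hj => by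
        rw [Function.update_of_ne (Finset.ne_of_mem_erase hj)]
    rw [hupdate, hbi]
    ring

end Stmt0Aux2
section Stmt0Aux3

variable {O : Type*} [CommRing O] [IsDomain O] [IsDiscreteValuationRing O]

lemma aux_lift_vector {n : ℕ} (xb : Fin n → IsLocalRing.ResidueField O) :
    ∃ x : Fin n → O, ∀ i, IsLocalRing.residue O (x i) = xb i := by
  choose x hx using fun i => IsLocalRing.residue_surjective (R := O) (xb i)
  exact ⟨x, hx⟩

lemma repr_of_universal [IsAdicComplete (IsLocalRing.maximalIdeal O) O]
    (h2 : IsUnit (2 : O)) {n : ℕ} (b : Fin n → Oˣ)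
    (huniv : QFUniversal (diagQF (IsLocalRing.ResidueField O)
      fun i => IsLocalRing.residue O (b i : O)))
    (g : O) (hg : IsUnit g) :
    ∃ y : Fin n → O, diagSum (fun i => (b i : O)) y = g := by
  have hrg : IsLocalRing.residue O g ≠ 0 := aux_residue_ne_zero_iff.mpr hg
  obtain ⟨xb, hxb⟩ := huniv _ hrg
  have hxb0 : xb ≠ 0 := by
    rintro rfl
    rw [map_zero] at hxb
    exact hrg hxb.symm
  obtain ⟨i, hi⟩ := Function.ne_iff.mp hxb0
  obtain ⟨x, hx⟩ := aux_lift_vector xb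
  have hxi : IsUnit (x i) := aux_residue_ne_zero_iff.mp (by rw [hx i]; exact hi)
  have hmem : diagSum (fun i => (b i : O)) x - g ∈ IsLocalRing.maximalIdeal O := by
    rw [← IsLocalRing.residue_eq_zero_iff, map_sub, residue_diagSum]
    have : (fun j => IsLocalRing.residue O (x j)) = xb := funext hx
    rw [this, hxb, sub_self]
  obtain ⟨y, _, hy⟩ := hensel_diagSum h2 b x i hxi g hmem
  exact ⟨y, hy⟩

lemma zero_lift [IsAdicComplete (IsLocalRing.maximalIdeal O) O]
    (h2 : IsUnit (2 : O)) {n : ℕ} (b : Fin n → Oˣ)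
    (xb : Fin n → IsLocalRing.ResidueField O) (hxb0 : xb ≠ 0)
    (h0 : diagQF (IsLocalRing.ResidueField O)
      (fun i => IsLocalRing.residue O (b i : O)) xb = 0) :
    ∃ (y : Fin n → O) (i : Fin n), IsUnit (y i) ∧ diagSum (fun i => (b i : O)) y = 0 := by
  obtain ⟨i, hi⟩ := Function.ne_iff.mp hxb0
  obtain ⟨x, hx⟩ := aux_lift_vector xb
  have hxi : IsUnit (x i) := aux_residue_ne_zero_iff.mp (by rw [hx i]; exact hi)
  have hmem : diagSum (fun i => (b i : O)) x - 0 ∈ IsLocalRing.maximalIdeal O := by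
    rw [← IsLocalRing.residue_eq_zero_iff, map_sub, residue_diagSum]
    have : (fun j => IsLocalRing.residue O (x j)) = xb := funext hx
    rw [this, h0, map_zero, sub_self]
  obtain ⟨y, hyi, hy⟩ := hensel_diagSum h2 b x i hxi 0 hmem
  exact ⟨y, i, hyi, hy⟩

lemma isUnit_diagSum_of_aniso {n : ℕ} (b : Fin n → Oˣ)
    (han : (diagQF (IsLocalRing.ResidueField O)
      fun i => IsLocalRing.residue O (b i : O)).Anisotropic)
    (x : Fin n → O) (i : Fin n) (hxi : IsUnit (x i)) :
    IsUnit (diagSum (fun i => (b i : O)) x) := by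
  rw [← aux_residue_ne_zero_iff, residue_diagSum]
  intro h0
  have := han _ h0
  have := congrFun this i
  exact aux_residue_ne_zero_iff.mpr hxi this

lemma aux_vector_factor {π : O} (hπ : Irreducible π) {ι : Type*} [Fintype ι]
    (a : ι → O) (i₀ : ι) (h0 : a i₀ ≠ 0) :
    ∃ (t : ℕ) (y : ι → O) (i : ι), IsUnit (y i) ∧ ∀ j, a j = π ^ t * y j := by
  obtain ⟨s, h, he⟩ := IsDiscreteValuationRing.eq_unit_mul_pow_irreducible h0 hπ
  clear h0
  induction s generalizing a h with
  | zero =>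
    refine ⟨0, a, i₀, ?_, fun j => by simp⟩
    rw [he, pow_zero, mul_one]
    exact h.isUnit
  | succ s ih =>
    by_cases hcase : ∃ i, IsUnit (a i)
    · obtain ⟨i, hi⟩ := hcase
      exact ⟨0, a, i, hi, fun j => by simp⟩
    · have hdvd : ∀ i, π ∣ a i := by
        intro i
        have hmem : a i ∈ IsLocalRing.maximalIdeal O :=
          (IsLocalRing.mem_maximalIdeal _).mpr (by simpa using not_exists.mp hcase i)
        rwa [hπ.maximalIdeal_eq, Ideal.mem_span_singleton] at hmem
      choose z hz using hdvd
      have hz0 : z i₀ = h * π ^ s := by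
        apply mul_left_cancel₀ hπ.ne_zero
        rw [← hz i₀, he]
        ring
      obtain ⟨t, y, i, hiy, hy⟩ := ih z h hz0
      exact ⟨t + 1, y, i, hiy, fun j => by rw [hz j, hy j]; ring⟩

lemma aux_pow_eq_pow {π : O} (hπ : Irreducible π) {a b : ℕ} {e f : Oˣ}
    (h : π ^ a * (e : O) = π ^ b * (f : O)) : a = b := by
  have key : ∀ (a b : ℕ) (e f : Oˣ), a ≤ b → π ^ a * (e : O) = π ^ b * (f : O) → a = b := by
    intro a b e f hab heq
    obtain ⟨c, rfl⟩ := Nat.exists_eq_add_of_le hab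
    have hcan : (e : O) = π ^ c * (f : O) := by
      apply mul_left_cancel₀ (pow_ne_zero a hπ.ne_zero)
      rw [heq, pow_add]
      ring
    have hc : c = 0 := by
      by_contra hc
      have : π ∣ (e : O) := by
        rw [hcan]
        exact Dvd.dvd.mul_right (dvd_pow_self π hc) _
      exact hπ.not_isUnit (isUnit_of_dvd_unit this e.isUnit)
    omega
  rcases le_total a b with hab | hab
  · exact key a b e f hab h
  · exact (key b a f e hab h.symm).symm

end Stmt0Aux3
section Stmt0Aux4

variable {O : Type*} [CommRing O] [IsDomain O] [IsDiscreteValuationRing O]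
variable {K : Type*} [Field K] [Algebra O K] [IsFractionRing O K]

lemma aux_common_denom {ι : Type*} [Fintype ι] (v : ι → K) :
    ∃ d : O, d ≠ 0 ∧ ∃ a : ι → O, ∀ i, algebraMap O K d * v i = algebraMap O K (a i) := by
  obtain ⟨b, hb⟩ := IsLocalization.exist_integer_multiples_of_finite (nonZeroDivisors O) v
  choose a ha using hb
  refine ⟨(b : O), nonZeroDivisors.ne_zero b.2, a, fun i => ?_⟩
  rw [ha i]; exact (Algebra.smul_def _ _).symm

/-- The integral value of `q₁ ⊥ π q₂` at an integral vector. -/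
def Tval (π : O) {n₁ n₂ : ℕ} (u : Fin n₁ → Oˣ) (w : Fin n₂ → Oˣ)
    (y : Fin n₁ ⊕ Fin n₂ → O) : O :=
  diagSum (fun i => (u i : O)) (fun i => y (Sum.inl i)) +
    π * diagSum (fun j => (w j : O)) (fun j => y (Sum.inr j))

lemma qK_eval (π : O) {n₁ n₂ : ℕ} (u : Fin n₁ → Oˣ) (w : Fin n₂ → Oˣ) (c : K)
    (x : Fin n₁ ⊕ Fin n₂ → O) :
    diagQF K (Sum.elim (fun i => algebraMap O K (u i : O))
        (fun j => algebraMap O K (π * (w j : O)))) (fun s => c * algebraMap O K (x s))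
      = c ^ 2 * algebraMap O K (Tval π u w x) := by
  have hR : (algebraMap O K) (Tval π u w x) =
      (∑ i, algebraMap O K (u i : O) *
        (algebraMap O K (x (Sum.inl i)) * algebraMap O K (x (Sum.inl i)))) +
      algebraMap O K π * ∑ j, algebraMap O K (w j : O) *
        (algebraMap O K (x (Sum.inr j)) * algebraMap O K (x (Sum.inr j))) := by
    simp [Tval, diagSum, map_sum, map_mul, map_add]
  simp only [diagQF, QuadraticMap.weightedSumSquares_apply, smul_eq_mul, Fintype.sum_sum_type,
    Sum.elim_inl, Sum.elim_inr, map_mul]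
  rw [hR, mul_add, ← mul_assoc, Finset.mul_sum, Finset.mul_sum]
  congr 1
  · exact Finset.sum_congr rfl fun i _ => by ring
  · exact Finset.sum_congr rfl fun j _ => by ring

lemma residue_pi_zero {π : O} (hπ : Irreducible π) : IsLocalRing.residue O π = 0 := by
  rw [IsLocalRing.residue_eq_zero_iff]
  exact (IsLocalRing.mem_maximalIdeal _).mpr hπ.not_isUnit

lemma residue_Tval {π : O} (hπ : Irreducible π) {n₁ n₂ : ℕ} (u : Fin n₁ → Oˣ)
    (w : Fin n₂ → Oˣ) (y : Fin n₁ ⊕ Fin n₂ → O) :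
    IsLocalRing.residue O (Tval π u w y) =
      diagQF (IsLocalRing.ResidueField O) (fun i => IsLocalRing.residue O (u i : O))
        (fun i => IsLocalRing.residue O (y (Sum.inl i))) := by
  rw [Tval, map_add, map_mul, residue_pi_zero hπ, zero_mul, add_zero, residue_diagSum]

lemma backbone {π : O} (hπ : Irreducible π) {n₁ n₂ : ℕ} {u : Fin n₁ → Oˣ} {w : Fin n₂ → Oˣ}
    (han₁ : (diagQF (IsLocalRing.ResidueField O)
      fun i => IsLocalRing.residue O (u i : O)).Anisotropic)
    (han₂ : (diagQF (IsLocalRing.ResidueField O)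
      fun j => IsLocalRing.residue O (w j : O)).Anisotropic)
    (y : Fin n₁ ⊕ Fin n₂ → O) (s₀ : Fin n₁ ⊕ Fin n₂) (hy : IsUnit (y s₀)) :
    IsUnit (Tval π u w y) ∨
      ∃ e : O, IsUnit e ∧ Tval π u w y = π * e ∧
        IsLocalRing.residue O e =
          diagQF (IsLocalRing.ResidueField O) (fun j => IsLocalRing.residue O (w j : O))
            (fun j => IsLocalRing.residue O (y (Sum.inr j))) := by
  classical
  by_cases hcase : ∃ i, IsUnit (y (Sum.inl i))
  · left
    obtain ⟨i, hi⟩ := hcase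
    have h1 : IsUnit (diagSum (fun i => (u i : O)) (fun i => y (Sum.inl i))) :=
      isUnit_diagSum_of_aniso u han₁ _ i hi
    rw [← aux_residue_ne_zero_iff, residue_Tval hπ, ← residue_diagSum]
    exact aux_residue_ne_zero_iff.mpr h1
  · have hdvd : ∀ i, π ∣ y (Sum.inl i) := by
      intro i
      have hmem : y (Sum.inl i) ∈ IsLocalRing.maximalIdeal O :=
        (IsLocalRing.mem_maximalIdeal _).mpr (by simpa using not_exists.mp hcase i)
      rwa [hπ.maximalIdeal_eq, Ideal.mem_span_singleton] at hmem
    choose z hz using hdvd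
    obtain ⟨j, hj⟩ : ∃ j, IsUnit (y (Sum.inr j)) := by
      cases s₀ with
      | inl i => exact absurd ⟨i, hy⟩ hcase
      | inr j => exact ⟨j, hy⟩
    have hS₁ : diagSum (fun i => (u i : O)) (fun i => y (Sum.inl i))
        = π * (π * diagSum (fun i => (u i : O)) z) := by
      rw [diagSum, diagSum, Finset.mul_sum, Finset.mul_sum]
      exact Finset.sum_congr rfl fun i _ => by rw [hz i]; ring
    refine Or.inr ⟨π * diagSum (fun i => (u i : O)) z +
      diagSum (fun j => (w j : O)) (fun j => y (Sum.inr j)), ?_, ?_, ?_⟩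
    · apply aux_isUnit_of_sub_mem
        (b := diagSum (fun j => (w j : O)) (fun j => y (Sum.inr j)))
      · rw [add_sub_cancel_right]
        exact Ideal.mul_mem_right _ _ ((IsLocalRing.mem_maximalIdeal _).mpr hπ.not_isUnit)
      · exact isUnit_diagSum_of_aniso w han₂ _ j hj
    · rw [Tval, hS₁]; ring
    · rw [map_add, map_mul, residue_pi_zero hπ, zero_mul, zero_add, residue_diagSum]

lemma master {π : O} (hπ : Irreducible π) {n₁ n₂ : ℕ} (u : Fin n₁ → Oˣ) (w : Fin n₂ → Oˣ)
    {v : Fin n₁ ⊕ Fin n₂ → K} (hv : v ≠ 0) :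
    ∃ (d : O) (t : ℕ) (y : Fin n₁ ⊕ Fin n₂ → O) (s₀ : Fin n₁ ⊕ Fin n₂),
      d ≠ 0 ∧ IsUnit (y s₀) ∧
      algebraMap O K (d ^ 2) *
        diagQF K (Sum.elim (fun i => algebraMap O K (u i : O))
          (fun j => algebraMap O K (π * (w j : O)))) v
        = algebraMap O K (π ^ (2 * t) * Tval π u w y) := by
  obtain ⟨d, hd, a, ha⟩ := aux_common_denom (O := O) v
  obtain ⟨s₁, hs₁⟩ := Function.ne_iff.mp hv
  have hdK : algebraMap O K d ≠ 0 := by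
    intro h'
    exact hd (IsFractionRing.injective O K (by rw [h', map_zero]))
  have ha0 : a s₁ ≠ 0 := by
    intro h
    have h2 := ha s₁
    rw [h, map_zero] at h2
    rcases mul_eq_zero.mp h2 with h3 | h3
    · exact hdK h3
    · exact hs₁ h3
  obtain ⟨t, y, s₀, hys₀, hy⟩ := aux_vector_factor hπ a s₁ ha0
  refine ⟨d, t, y, s₀, hd, hys₀, ?_⟩
  have hsmul : (fun s => algebraMap O K π ^ t * algebraMap O K (y s))
      = fun s => algebraMap O K d * v s := by
    funext s
    rw [ha s, hy s, map_mul, map_pow]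
  have hq := qK_eval (O := O) (K := K) π u w (algebraMap O K π ^ t) y
  rw [hsmul] at hq
  have hQsmul : diagQF K (Sum.elim (fun i => algebraMap O K (u i : O))
        (fun j => algebraMap O K (π * (w j : O)))) (fun s => algebraMap O K d * v s)
      = algebraMap O K d ^ 2 *
        diagQF K (Sum.elim (fun i => algebraMap O K (u i : O))
          (fun j => algebraMap O K (π * (w j : O)))) v := by
    have hfun : (fun s => algebraMap O K d * v s) = (algebraMap O K d) • v := by
      funext s; rw [Pi.smul_apply, smul_eq_mul]
    rw [hfun, QuadraticMap.map_smul, smul_eq_mul, sq]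
  rw [hQsmul] at hq
  rw [map_mul, map_pow, hq]
  ring_nf
  rw [map_pow]
  ring
end Stmt0Aux4
/-- Over a complete discretely valued field `K` (the fraction field of a
complete discrete valuation ring `O` with residue field of characteristic `≠ 2`), a quadratic
form `q ≃ q₁ ⊥ π·q₂` (with unit entries) is anisotropic and universal over `K` iff both residue
forms have positive dimension and are anisotropic and universal over the residue field. -/
theorem stmt0 (O K : Type*) [CommRing O] [IsDomain O] [IsDiscreteValuationRing O]
    [IsAdicComplete (IsLocalRing.maximalIdeal O) O]
    [Field K] [Algebra O K] [IsFractionRing O K]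
    (hchar : ringChar (IsLocalRing.ResidueField O) ≠ 2)
    (π : O) (hπ : Irreducible π)
    (n₁ n₂ : ℕ) (u : Fin n₁ → Oˣ) (w : Fin n₂ → Oˣ) :
    ((diagQF K (Sum.elim (fun i => algebraMap O K (u i : O))
        (fun j => algebraMap O K (π * (w j : O))))).Anisotropic ∧
      QFUniversal (diagQF K (Sum.elim (fun i => algebraMap O K (u i : O))
        (fun j => algebraMap O K (π * (w j : O)))))) ↔
    (0 < n₁ ∧ 0 < n₂ ∧
      (diagQF (IsLocalRing.ResidueField O) fun i => IsLocalRing.residue O (u i : O)).Anisotropic ∧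
      QFUniversal (diagQF (IsLocalRing.ResidueField O) fun i => IsLocalRing.residue O (u i : O)) ∧
      (diagQF (IsLocalRing.ResidueField O) fun j => IsLocalRing.residue O (w j : O)).Anisotropic ∧
      QFUniversal (diagQF (IsLocalRing.ResidueField O) fun j => IsLocalRing.residue O (w j : O))) := by
  have h2 : IsUnit (2 : O) := aux_two_isUnit hchar
  have hπ0 : π ≠ 0 := hπ.ne_zero
  have hinj : Function.Injective (algebraMap O K) := IsFractionRing.injective O K
  have hφ : ∀ {z : O}, z ≠ 0 → algebraMap O K z ≠ 0 := by
    intro z hz h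
    exact hz (hinj (by rw [h, map_zero]))
  constructor
  · rintro ⟨haniso, huniv⟩
    -- Step A: both residue forms are anisotropic
    have han₁ : (diagQF (IsLocalRing.ResidueField O)
        fun i => IsLocalRing.residue O (u i : O)).Anisotropic := by
      intro xb h0
      by_contra hne
      obtain ⟨y, i, hyi, hy0⟩ := zero_lift h2 u xb hne h0
      have hv0 : (Sum.elim (fun i => algebraMap O K (y i)) 0 : Fin n₁ ⊕ Fin n₂ → K) = 0 := by
        apply haniso
        have hq := qK_eval (O := O) (K := K) π u w 1 (Sum.elim y 0)
        have hveq : (fun s => (1 : K) * algebraMap O K ((Sum.elim y 0 : _ → O) s))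
            = Sum.elim (fun i => algebraMap O K (y i)) (0 : Fin n₂ → K) := by
          funext s; cases s <;> simp
        rw [hveq] at hq
        rw [hq]
        have hT : Tval π u w (Sum.elim y 0) = 0 := by
          have h1 : diagSum (fun i => (u i : O))
              (fun i => (Sum.elim y (0 : Fin n₂ → O)) (Sum.inl i)) = 0 := hy0
          have hz : diagSum (fun j => (w j : O))
              (fun j => (Sum.elim y (0 : Fin n₂ → O)) (Sum.inr j)) = 0 := by simp [diagSum]
          rw [Tval, h1, hz, mul_zero, add_zero]
        rw [hT, map_zero, mul_zero]
      have hcf := congrFun hv0 (Sum.inl i)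
      simp only [Sum.elim_inl, Pi.zero_apply] at hcf
      exact hyi.ne_zero (hinj (by rw [hcf, map_zero]))
    have han₂ : (diagQF (IsLocalRing.ResidueField O)
        fun j => IsLocalRing.residue O (w j : O)).Anisotropic := by
      intro xb h0
      by_contra hne
      obtain ⟨y, j, hyj, hy0⟩ := zero_lift h2 w xb hne h0
      have hv0 : (Sum.elim 0 (fun j => algebraMap O K (y j)) : Fin n₁ ⊕ Fin n₂ → K) = 0 := by
        apply haniso
        have hq := qK_eval (O := O) (K := K) π u w 1 (Sum.elim 0 y)
        have hveq : (fun s => (1 : K) * algebraMap O K ((Sum.elim (0 : Fin n₁ → O) y : _ → O) s))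
            = Sum.elim (0 : Fin n₁ → K) (fun j => algebraMap O K (y j)) := by
          funext s; cases s <;> simp
        rw [hveq] at hq
        rw [hq]
        have hT : Tval π u w (Sum.elim 0 y) = 0 := by
          have h1 : diagSum (fun j => (w j : O))
              (fun j => (Sum.elim (0 : Fin n₁ → O) y) (Sum.inr j)) = 0 := hy0
          have hz : diagSum (fun i => (u i : O))
              (fun i => (Sum.elim (0 : Fin n₁ → O) y) (Sum.inl i)) = 0 := by simp [diagSum]
          rw [Tval, h1, hz, mul_zero, add_zero]
        rw [hT, map_zero, mul_zero]
      have hcf := congrFun hv0 (Sum.inr j)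
      simp only [Sum.elim_inr, Pi.zero_apply] at hcf
      exact hyj.ne_zero (hinj (by rw [hcf, map_zero]))
    -- Step B: the workhorse
    have workhorse : ∀ g : O, IsUnit g → ∀ ε : ℕ, ε ≤ 1 →
        ∃ (y : Fin n₁ ⊕ Fin n₂ → O) (h : Oˣ),
          (ε = 0 → diagQF (IsLocalRing.ResidueField O)
              (fun i => IsLocalRing.residue O (u i : O))
              (fun i => IsLocalRing.residue O (y (Sum.inl i)))
            = IsLocalRing.residue O (h : O) * IsLocalRing.residue O (h : O)
              * IsLocalRing.residue O g) ∧
          (ε = 1 → diagQF (IsLocalRing.ResidueField O)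
              (fun j => IsLocalRing.residue O (w j : O))
              (fun j => IsLocalRing.residue O (y (Sum.inr j)))
            = IsLocalRing.residue O (h : O) * IsLocalRing.residue O (h : O)
              * IsLocalRing.residue O g) := by
      intro g hg ε hε
      have htarget : algebraMap O K (π ^ ε * g) ≠ 0 :=
        hφ (mul_ne_zero (pow_ne_zero _ hπ0) hg.ne_zero)
      obtain ⟨v, hv⟩ := huniv _ htarget
      have hvne : v ≠ 0 := by
        rintro rfl
        rw [QuadraticMap.map_zero] at hv
        exact htarget hv.symm
      obtain ⟨d, t, y, s₀, hd, hys₀, heq⟩ := master hπ u w hvne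
      rw [hv, ← map_mul] at heq
      have heqO : d ^ 2 * (π ^ ε * g) = π ^ (2 * t) * Tval π u w y := hinj heq
      obtain ⟨s, hunit, hds⟩ := IsDiscreteValuationRing.eq_unit_mul_pow_irreducible hd hπ
      set G : Oˣ := hunit ^ 2 * hg.unit with hGdef
      have hGc : (G : O) = (hunit : O) ^ 2 * g := by
        rw [hGdef, Units.val_mul, Units.val_pow_eq_pow_val, IsUnit.unit_spec]
      have hkey : π ^ (2 * s + ε) * (G : O) = π ^ (2 * t) * Tval π u w y := by
        rw [← heqO, hds, hGc, pow_add]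
        ring
      refine ⟨y, hunit, ?_, ?_⟩ <;>
        rcases backbone hπ han₁ han₂ y s₀ hys₀ with hT | ⟨e, he, hTe, hre⟩
      · -- ε = 0, case T unit
        intro hε0
        subst hε0
        have hexp : 2 * s + 0 = 2 * t :=
          aux_pow_eq_pow hπ (e := G) (f := hT.unit) (by rw [IsUnit.unit_spec]; exact hkey)
        have hts : t = s := by omega
        subst hts
        rw [add_zero] at hkey
        have hcan : (G : O) = Tval π u w y := mul_left_cancel₀ (pow_ne_zero _ hπ0) hkey
        rw [← residue_Tval hπ u w y, ← hcan, hGc, map_mul, map_pow]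
        ring
      · -- ε = 0, case T = π e : impossible by parity
        intro hε0
        subst hε0
        have hkey2 : π ^ (2 * s + 0) * (G : O) = π ^ (2 * t + 1) * e := by
          rw [hkey, hTe, pow_succ]
          ring
        have hexp : 2 * s + 0 = 2 * t + 1 :=
          aux_pow_eq_pow hπ (e := G) (f := he.unit) (by rw [IsUnit.unit_spec]; exact hkey2)
        omega
      · -- ε = 1, case T unit : impossible by parity
        intro hε1
        subst hε1
        have hexp : 2 * s + 1 = 2 * t :=
          aux_pow_eq_pow hπ (e := G) (f := hT.unit) (by rw [IsUnit.unit_spec]; exact hkey)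
        omega
      · -- ε = 1, case T = π e
        intro hε1
        subst hε1
        have hkey2 : π ^ (2 * s + 1) * (G : O) = π ^ (2 * t + 1) * e := by
          rw [hkey, hTe, pow_succ]
          ring
        have hexp : 2 * s + 1 = 2 * t + 1 :=
          aux_pow_eq_pow hπ (e := G) (f := he.unit) (by rw [IsUnit.unit_spec]; exact hkey2)
        have hts : t = s := by omega
        subst hts
        have hcan : (G : O) = e := mul_left_cancel₀ (pow_ne_zero _ hπ0) hkey2
        rw [← hre, ← hcan, hGc, map_mul, map_pow]
        ring
    have hrone : ∀ h : Oˣ, IsLocalRing.residue O (h : O) ≠ 0 :=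
      fun h => aux_residue_ne_zero_iff.mpr h.isUnit
    refine ⟨?_, ?_, han₁, ?_, han₂, ?_⟩
    · -- 0 < n₁
      obtain ⟨y, h, h1, _⟩ := workhorse 1 isUnit_one 0 (by omega)
      have hval := h1 rfl
      by_contra hn
      have hn1 : n₁ = 0 := by omega
      rw [diagQF_eq_zero_of_isEmpty hn1, map_one, mul_one] at hval
      exact hrone h (by rcases mul_eq_zero.mp hval.symm with h' | h' <;> exact h')
    · -- 0 < n₂
      obtain ⟨y, h, _, h1⟩ := workhorse 1 isUnit_one 1 le_rfl
      have hval := h1 rfl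
      by_contra hn
      have hn2 : n₂ = 0 := by omega
      rw [diagQF_eq_zero_of_isEmpty hn2, map_one, mul_one] at hval
      exact hrone h (by rcases mul_eq_zero.mp hval.symm with h' | h' <;> exact h')
    · -- universality of the first residue form
      intro ab hab
      obtain ⟨g, hg⟩ := IsLocalRing.residue_surjective (R := O) ab
      have hgu : IsUnit g := aux_residue_ne_zero_iff.mp (by rw [hg]; exact hab)
      obtain ⟨y, h, h1, _⟩ := workhorse g hgu 0 (by omega)
      have hval := h1 rfl
      have hrh := hrone h
      refine ⟨(IsLocalRing.residue O (h : O))⁻¹ •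
        fun i => IsLocalRing.residue O (y (Sum.inl i)), ?_⟩
      rw [QuadraticMap.map_smul, hval, hg, smul_eq_mul]
      field_simp
    · -- universality of the second residue form
      intro ab hab
      obtain ⟨g, hg⟩ := IsLocalRing.residue_surjective (R := O) ab
      have hgu : IsUnit g := aux_residue_ne_zero_iff.mp (by rw [hg]; exact hab)
      obtain ⟨y, h, _, h1⟩ := workhorse g hgu 1 le_rfl
      have hval := h1 rfl
      have hrh := hrone h
      refine ⟨(IsLocalRing.residue O (h : O))⁻¹ •
        fun j => IsLocalRing.residue O (y (Sum.inr j)), ?_⟩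
      rw [QuadraticMap.map_smul, hval, hg, smul_eq_mul]
      field_simp
  · rintro ⟨hn₁, hn₂, han₁, huniv₁, han₂, huniv₂⟩
    constructor
    · -- anisotropic
      intro v hQv
      by_contra hvne
      obtain ⟨d, t, y, s₀, hd, hys₀, heq⟩ := master hπ u w hvne
      rw [hQv, mul_zero] at heq
      have hT0 : Tval π u w y = 0 := by
        have h0 : π ^ (2 * t) * Tval π u w y = 0 :=
          hinj (by rw [map_zero, ← heq])
        rcases mul_eq_zero.mp h0 with h' | h'
        · exact absurd h' (pow_ne_zero _ hπ0)
        · exact h'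
      rcases backbone hπ han₁ han₂ y s₀ hys₀ with hT | ⟨e, he, hTe, _⟩
      · rw [hT0] at hT
        exact not_isUnit_zero hT
      · rw [hT0] at hTe
        have he0 : e = 0 := by
          rcases mul_eq_zero.mp hTe.symm with h' | h'
          · exact absurd h' hπ0
          · exact h'
        rw [he0] at he
        exact not_isUnit_zero he
    · -- universal
      intro α hα
      obtain ⟨o, dd, hddmem, hdiv⟩ := IsFractionRing.div_surjective (A := O) α
      have hdd0 : dd ≠ 0 := nonZeroDivisors.ne_zero hddmem
      have ho : o ≠ 0 := by
        rintro rfl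
        rw [map_zero, zero_div] at hdiv
        exact hα hdiv.symm
      obtain ⟨s₁, h₁, ho'⟩ := IsDiscreteValuationRing.eq_unit_mul_pow_irreducible ho hπ
      obtain ⟨s₂, h₂, hd'⟩ := IsDiscreteValuationRing.eq_unit_mul_pow_irreducible hdd0 hπ
      set g : Oˣ := h₁ * h₂⁻¹ with hgdef
      set P : K := algebraMap O K π with hPdef
      have hP0 : P ≠ 0 := hφ hπ0
      have hα' : α = algebraMap O K (g : O) * P ^ ((s₁ : ℤ) - s₂) := by
        have hgq : (algebraMap O K (g : O)) =
            algebraMap O K (h₁ : O) / algebraMap O K (h₂ : O) := by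
          rw [eq_div_iff (hφ h₂.ne_zero), ← map_mul]
          congr 1
          rw [hgdef, ← Units.val_mul, inv_mul_cancel_right]
        rw [← hdiv, ho', hd', map_mul, map_mul, map_pow, map_pow,
          zpow_sub₀ hP0, zpow_natCast, zpow_natCast, hgq, hPdef]
        field_simp
      obtain ⟨m, hm | hm⟩ := Int.even_or_odd' ((s₁ : ℤ) - s₂)
      · -- even case : use the first residue form
        obtain ⟨x₁, hx₁⟩ := repr_of_universal h2 u huniv₁ (g : O) g.isUnit
        refine ⟨fun s => P ^ m * algebraMap O K ((Sum.elim x₁ 0 : _ → O) s), ?_⟩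
        rw [qK_eval (O := O) (K := K) π u w (P ^ m) (Sum.elim x₁ 0)]
        have hT : Tval π u w (Sum.elim x₁ 0) = (g : O) := by
          have hz : diagSum (fun j => (w j : O))
              (fun j => (Sum.elim x₁ (0 : Fin n₂ → O)) (Sum.inr j)) = 0 := by simp [diagSum]
          have h1 : diagSum (fun i => (u i : O))
              (fun i => (Sum.elim x₁ (0 : Fin n₂ → O)) (Sum.inl i)) = (g : O) := hx₁
          rw [Tval, h1, hz, mul_zero, add_zero]
        have hsq : (P ^ m) ^ 2 = P ^ (2 * m) := by
          rw [← zpow_natCast (P ^ m) 2, ← zpow_mul]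
          congr 1
          push_cast
          ring
        rw [hT, hα', hm, hsq]
        ring
      · -- odd case : use the second residue form
        obtain ⟨x₂, hx₂⟩ := repr_of_universal h2 w huniv₂ (g : O) g.isUnit
        refine ⟨fun s => P ^ m * algebraMap O K ((Sum.elim 0 x₂ : _ → O) s), ?_⟩
        rw [qK_eval (O := O) (K := K) π u w (P ^ m) (Sum.elim 0 x₂)]
        have hT : Tval π u w (Sum.elim 0 x₂) = π * (g : O) := by
          have hz : diagSum (fun i => (u i : O))
              (fun i => (Sum.elim (0 : Fin n₁ → O) x₂) (Sum.inl i)) = 0 := by simp [diagSum]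
          have h1 : diagSum (fun j => (w j : O))
              (fun j => (Sum.elim (0 : Fin n₁ → O) x₂) (Sum.inr j)) = (g : O) := hx₂
          rw [Tval, h1, hz, zero_add]
        have hsq : (P ^ m) ^ 2 = P ^ (2 * m) := by
          rw [← zpow_natCast (P ^ m) 2, ← zpow_mul]
          congr 1
          push_cast
          ring
        rw [hT, hα', hm, hsq, map_mul]
        rw [zpow_add₀ hP0, zpow_one]
        rw [← hPdef]
        ring
end

section
/- Let $K$ be a complete discretely valued field with residue field $k$ of characteristic $\ne 2$. Then $\mathrm{AU}(K) = \{r_1 + r_2 \mid r_1, r_2 \in \mathrm{AU}(k)\}$. -/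
open scoped Multiplicative ENNReal

universe u

open IsLocalRing Polynomial

lemma diagQF_apply {k : Type*} [Field k] {ι : Type*} [Fintype ι] (a : ι → k) (v : ι → k) :
    diagQF k a v = ∑ i, a i * (v i)^2 := by
  rw [diagQF, QuadraticMap.weightedSumSquares_apply]
  exact Finset.sum_congr rfl fun i _ => by rw [smul_eq_mul, pow_two]

section transfer
variable {k M M' : Type*} [Field k] [AddCommGroup M] [Module k M] [AddCommGroup M'] [Module k M']

lemma qf_transfer (q : QuadraticForm k M) (q' : QuadraticForm k M') (f : M' ≃ M)
    (hf : ∀ x, q' x = q (f x)) (h0 : f 0 = 0) :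
    (q.Anisotropic ↔ q'.Anisotropic) ∧ (QFUniversal q ↔ QFUniversal q') := by
  have h0' : f.symm 0 = 0 := by rw [← h0, Equiv.symm_apply_apply]
  constructor
  · constructor
    · intro hq x hx
      rw [hf] at hx
      have := hq _ hx
      have := congrArg f.symm this
      rwa [Equiv.symm_apply_apply, h0'] at this
    · intro hq x hx
      have : q' (f.symm x) = 0 := by rw [hf, Equiv.apply_symm_apply]; exact hx
      have := hq _ this
      have := congrArg f this
      rwa [Equiv.apply_symm_apply, h0] at this
  · constructor
    · intro hq a ha
      obtain ⟨x, hx⟩ := hq a ha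
      exact ⟨f.symm x, by rw [hf, Equiv.apply_symm_apply]; exact hx⟩
    · intro hq a ha
      obtain ⟨x, hx⟩ := hq a ha
      exact ⟨f x, by rw [← hf]; exact hx⟩

end transfer

section diag
variable {k : Type*} [Field k] {ι ι' : Type*} [Fintype ι] [Fintype ι']

/-- reindexing -/
lemma diagQF_reindex (e : ι' ≃ ι) (a : ι → k) :
    ((diagQF k a).Anisotropic ↔ (diagQF k (a ∘ e)).Anisotropic) ∧
    (QFUniversal (diagQF k a) ↔ QFUniversal (diagQF k (a ∘ e))) := by
  refine qf_transfer _ _ (Equiv.arrowCongr e.symm (Equiv.refl k)).symm ?_ ?_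
  · intro x
    rw [diagQF_apply, diagQF_apply]
    refine Fintype.sum_equiv e _ _ fun j => ?_
    simp [Equiv.arrowCongr]
  · ext i; simp [Equiv.arrowCongr]

/-- scaling entries by squares -/
lemma diagQF_scale (a t : ι → k) (ht : ∀ i, t i ≠ 0) :
    ((diagQF k a).Anisotropic ↔ (diagQF k (fun i => a i * (t i)^2)).Anisotropic) ∧
    (QFUniversal (diagQF k a) ↔ QFUniversal (diagQF k (fun i => a i * (t i)^2))) := by
  refine qf_transfer _ _ ⟨fun y i => t i * y i, fun x i => (t i)⁻¹ * x i, ?_, ?_⟩ ?_ ?_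
  · intro y; ext i; exact inv_mul_cancel_left₀ (ht i) _
  · intro x; ext i; exact mul_inv_cancel_left₀ (ht i) _
  · intro x
    rw [diagQF_apply, diagQF_apply]
    apply Finset.sum_congr rfl
    intro i _
    simp only [Equiv.coe_fn_mk]
    ring
  · ext i; simp


lemma diagQF_sum_apply (c₁ : ι → k) (c₂ : ι' → k) (x : ι ⊕ ι' → k) :
    diagQF k (Sum.elim c₁ c₂) x =
      diagQF k c₁ (x ∘ Sum.inl) + diagQF k c₂ (x ∘ Sum.inr) := by
  rw [diagQF_apply, diagQF_apply, diagQF_apply, Fintype.sum_sum_type]; rfl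

end diag

section O
variable {O : Type*} [CommRing O] [IsDomain O] [IsDiscreteValuationRing O]
  {ι ι₁ ι₂ : Type*} [Fintype ι] [Fintype ι₁] [Fintype ι₂]
  {π : O} (hπ : Irreducible π)
include hπ
local notation "k" => ResidueField O
local notation "ρ" => residue O

lemma mem_max_iff_dvd {x : O} : x ∈ maximalIdeal O ↔ π ∣ x := by
  rw [hπ.maximalIdeal_eq, Ideal.mem_span_singleton]

omit hπ in
lemma res_sum_sq (a x : ι → O) :
    ρ (∑ i, a i * (x i)^2) = ∑ i, ρ (a i) * (ρ (x i))^2 := by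
  rw [map_sum]
  exact Finset.sum_congr rfl fun i _ => by rw [map_mul, map_pow]

omit hπ in
/-- L3: residue-anisotropy forces coordinates into the maximal ideal. -/
lemma coords_mem_max (a : ι → Oˣ)
    (ha : (diagQF k fun i => ρ (a i : O)).Anisotropic) (x : ι → O)
    (hx : ∑ i, (a i : O) * (x i)^2 ∈ maximalIdeal O) : ∀ i, x i ∈ maximalIdeal O := by
  intro i
  have h0 : (fun i => ρ (x i)) = 0 := by
    apply ha
    rw [diagQF_apply, ← res_sum_sq, residue_eq_zero_iff]
    exact hx
  rw [← residue_eq_zero_iff]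
  exact congrFun h0 i

/-- one descent step -/
lemma descent_step (a : ι₁ → Oˣ) (b : ι₂ → Oˣ)
    (ha : (diagQF k fun i => ρ (a i : O)).Anisotropic)
    (hb : (diagQF k fun j => ρ (b j : O)).Anisotropic)
    (X : ι₁ → O) (Y : ι₂ → O) (v : O)
    (h : ∑ i, (a i : O) * (X i)^2 + π * ∑ j, (b j : O) * (Y j)^2 = v * π^2) :
    ∃ (X₁ : ι₁ → O) (Y₁ : ι₂ → O), (∀ i, X i = π * X₁ i) ∧ (∀ j, Y j = π * Y₁ j) ∧
      ∑ i, (a i : O) * (X₁ i)^2 + π * ∑ j, (b j : O) * (Y₁ j)^2 = v := by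
  have hπ0 : π ≠ 0 := hπ.ne_zero
  have hXm : ∀ i, X i ∈ maximalIdeal O := by
    apply coords_mem_max a ha
    rw [mem_max_iff_dvd hπ]
    have : ∑ i, (a i : O) * (X i)^2 = v * π^2 - π * ∑ j, (b j : O) * (Y j)^2 := by
      linear_combination h
    rw [this]
    exact dvd_sub ⟨v * π, by ring⟩ (dvd_mul_right π _)
  choose X₁ hX₁ using fun i => (mem_max_iff_dvd hπ).mp (hXm i)
  have h2 : π * (π * ∑ i, (a i : O) * (X₁ i)^2 + ∑ j, (b j : O) * (Y j)^2) = π * (v * π) := by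
    have : ∑ i, (a i : O) * (X i)^2 = π^2 * ∑ i, (a i : O) * (X₁ i)^2 := by
      rw [Finset.mul_sum]
      exact Finset.sum_congr rfl fun i _ => by rw [hX₁ i]; ring
    linear_combination h - this
  have h2' : π * ∑ i, (a i : O) * (X₁ i)^2 + ∑ j, (b j : O) * (Y j)^2 = v * π :=
    mul_left_cancel₀ hπ0 h2
  have hYm : ∀ j, Y j ∈ maximalIdeal O := by
    apply coords_mem_max b hb
    rw [mem_max_iff_dvd hπ]
    have : ∑ j, (b j : O) * (Y j)^2 = v * π - π * ∑ i, (a i : O) * (X₁ i)^2 := by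
      linear_combination h2'
    rw [this]
    exact dvd_sub ⟨v, by ring⟩ (dvd_mul_right π _)
  choose Y₁ hY₁ using fun j => (mem_max_iff_dvd hπ).mp (hYm j)
  refine ⟨X₁, Y₁, fun i => hX₁ i, fun j => hY₁ j, ?_⟩
  have h3 : π * (∑ i, (a i : O) * (X₁ i)^2 + π * ∑ j, (b j : O) * (Y₁ j)^2) = π * v := by
    have : ∑ j, (b j : O) * (Y j)^2 = π^2 * ∑ j, (b j : O) * (Y₁ j)^2 := by
      rw [Finset.mul_sum]
      exact Finset.sum_congr rfl fun j _ => by rw [hY₁ j]; ring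
    linear_combination h2' - this
  exact mul_left_cancel₀ hπ0 h3

/-- descent for values -/
lemma descent_val (a : ι₁ → Oˣ) (b : ι₂ → Oˣ)
    (ha : (diagQF k fun i => ρ (a i : O)).Anisotropic)
    (hb : (diagQF k fun j => ρ (b j : O)).Anisotropic) (v : O) :
    ∀ (N : ℕ) (X : ι₁ → O) (Y : ι₂ → O),
      ∑ i, (a i : O) * (X i)^2 + π * ∑ j, (b j : O) * (Y j)^2 = v * π^(2*N) →
      ∃ (X' : ι₁ → O) (Y' : ι₂ → O),
        ∑ i, (a i : O) * (X' i)^2 + π * ∑ j, (b j : O) * (Y' j)^2 = v := by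
  intro N
  induction N with
  | zero => intro X Y h; exact ⟨X, Y, by simpa using h⟩
  | succ N ih =>
    intro X Y h
    obtain ⟨X₁, Y₁, _, _, h₁⟩ := descent_step hπ a b ha hb X Y (v * π^(2*N))
      (by rw [show v * π^(2*N) * π^2 = v * π^(2*(N+1)) by ring]; exact h)
    exact ih X₁ Y₁ h₁

/-- descent for isotropic vectors: full divisibility -/
lemma descent_zero (a : ι₁ → Oˣ) (b : ι₂ → Oˣ)
    (ha : (diagQF k fun i => ρ (a i : O)).Anisotropic)
    (hb : (diagQF k fun j => ρ (b j : O)).Anisotropic) :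
    ∀ (n : ℕ) (X : ι₁ → O) (Y : ι₂ → O),
      ∑ i, (a i : O) * (X i)^2 + π * ∑ j, (b j : O) * (Y j)^2 = 0 →
      (∀ i, π^n ∣ X i) ∧ (∀ j, π^n ∣ Y j) := by
  intro n
  induction n with
  | zero => intro X Y _; simp
  | succ n ih =>
    intro X Y h
    obtain ⟨X₁, Y₁, hX, hY, h₁⟩ := descent_step hπ a b ha hb X Y 0 (by rw [zero_mul]; exact h)
    obtain ⟨ihX, ihY⟩ := ih X₁ Y₁ h₁
    constructor
    · intro i; rw [hX i, pow_succ, mul_comm (π^n) π]; exact mul_dvd_mul_left π (ihX i)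
    · intro j; rw [hY j, pow_succ, mul_comm (π^n) π]; exact mul_dvd_mul_left π (ihY j)

lemma eq_zero_of_pow_dvd (x : O) (h : ∀ n : ℕ, π^n ∣ x) : x = 0 := by
  by_contra hx
  obtain ⟨n, u, hu⟩ := IsDiscreteValuationRing.eq_unit_mul_pow_irreducible hx hπ
  have hd := h (n+1)
  rw [hu, pow_succ] at hd
  obtain ⟨d, hd⟩ := hd
  have : (u : O) = π * d := by
    apply mul_left_cancel₀ (pow_ne_zero n hπ.ne_zero)
    rw [show π^n * (u : O) = (u : O) * π^n by ring, hd]; ring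
  exact hπ.not_isUnit (isUnit_of_dvd_unit ⟨d, this⟩ u.isUnit)


omit hπ in
lemma res_unit_ne_zero (u : Oˣ) : ρ (u : O) ≠ 0 :=
  (residue_ne_zero_iff_isUnit _).mpr u.isUnit

omit hπ in
lemma hensel_lift [IsAdicComplete (IsLocalRing.maximalIdeal O) O] (h2 : (2 : k) ≠ 0) (a : ι → Oˣ) (c : O) (xb : ι → k) (i₀ : ι)
    (h₀ : xb i₀ ≠ 0) (hsum : ∑ i, ρ (a i : O) * (xb i)^2 = ρ c) :
    ∃ x : ι → O, ∑ i, (a i : O) * (x i)^2 = c ∧ x i₀ ∉ maximalIdeal O := by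
  classical
  have hres : Function.Surjective ρ := Ideal.Quotient.mk_surjective
  choose x₀ hx₀ using fun i => hres (xb i)
  set s : O := ∑ j ∈ Finset.univ.erase i₀, (a j : O) * (x₀ j)^2 with hs
  set e : O := ((a i₀)⁻¹ : Oˣ) * (s - c) with he
  set f : O[X] := X^2 + C e with hf
  have hmonic : f.Monic := monic_X_pow_add_C e (by norm_num)
  have hcancel : ∀ y : O, ((a i₀ : O)) * (((a i₀)⁻¹ : Oˣ) * y) = y := fun y => by
    rw [← mul_assoc, ← Units.val_mul, mul_inv_cancel, Units.val_one, one_mul]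
  have heval : f.eval (x₀ i₀) ∈ maximalIdeal O := by
    have key : ((a i₀ : O)) * f.eval (x₀ i₀) = (∑ i, (a i : O) * (x₀ i)^2) - c := by
      rw [hf]
      simp only [eval_add, eval_pow, eval_X, eval_C, he]
      rw [← Finset.add_sum_erase _ _ (Finset.mem_univ i₀), ← hs, mul_add, hcancel]
      ring
    have hm : ((a i₀ : O)) * f.eval (x₀ i₀) ∈ maximalIdeal O := by
      rw [key, ← residue_eq_zero_iff, map_sub, res_sum_sq]
      have : ∀ i, ρ (x₀ i) = xb i := hx₀
      simp only [this]
      rw [hsum, sub_self]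
    exact (Ideal.unit_mul_mem_iff_mem _ (a i₀).isUnit).mp hm
  have hderiv : IsUnit (Ideal.Quotient.mk (maximalIdeal O) (f.derivative.eval (x₀ i₀))) := by
    have hd : f.derivative.eval (x₀ i₀) = 2 * x₀ i₀ := by
      rw [hf]; simp [derivative_X_pow, one_add_one_eq_two]
    rw [hd]
    show IsUnit (ρ (2 * x₀ i₀))
    rw [map_mul]
    refine isUnit_iff_ne_zero.mpr (mul_ne_zero ?_ ?_)
    · exact fun h => h2 (by rw [← h]; rw [map_ofNat])
    · rw [show ρ (x₀ i₀) = xb i₀ from hx₀ i₀]; exact h₀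
  obtain ⟨t, ht, htm⟩ :=
    (IsAdicComplete.henselianRing O (maximalIdeal O)).is_henselian f hmonic (x₀ i₀) heval hderiv
  have hroot : t^2 + e = 0 := by
    have := ht
    rw [IsRoot, hf] at this
    simpa using this
  refine ⟨Function.update x₀ i₀ t, ?_, ?_⟩
  · rw [← Finset.add_sum_erase _ _ (Finset.mem_univ i₀), Function.update_self]
    have herase : ∑ j ∈ Finset.univ.erase i₀, (a j : O) * (Function.update x₀ i₀ t j)^2 = s := by
      apply Finset.sum_congr rfl
      intro j hj
      rw [Function.update_of_ne (Finset.ne_of_mem_erase hj)]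
    rw [herase]
    have h1 : (a i₀ : O) * t^2 = c - s := by
      have ht2 : t^2 = -e := eq_neg_of_add_eq_zero_left hroot
      rw [ht2, he, mul_neg, hcancel]
      ring
    rw [h1]; ring
  · rw [Function.update_self, ← residue_eq_zero_iff]
    have hts : ρ (t - x₀ i₀) = 0 := residue_eq_zero_iff _ |>.mpr htm
    rw [map_sub, sub_eq_zero] at hts
    rw [hts, show ρ (x₀ i₀) = xb i₀ from hx₀ i₀]
    exact h₀


end O

section K
variable {O : Type*} [CommRing O] [IsDomain O] [IsDiscreteValuationRing O]
  {K : Type*} [Field K] [Algebra O K] [IsFractionRing O K]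
  {ι ι₁ ι₂ : Type*} [Fintype ι] [Fintype ι₁] [Fintype ι₂]
  {π : O} (hπ : Irreducible π)

local notation "φ" => algebraMap O K

omit hπ in
lemma phi_inj : Function.Injective (φ) := IsFractionRing.injective O K

omit hπ in
lemma phi_ne_zero {x : O} (hx : x ≠ 0) : φ x ≠ 0 := fun h => hx (phi_inj (h.trans (map_zero _).symm))

omit hπ in
lemma clear_denom (z : ι → K) :
    ∃ d : O, d ≠ 0 ∧ ∃ Z : ι → O, ∀ i, φ d * z i = φ (Z i) := by
  obtain ⟨b, hb⟩ := IsLocalization.exist_integer_multiples_of_finite (nonZeroDivisors O) z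
  choose Z hZ using hb
  refine ⟨(b : O), nonZeroDivisors.coe_ne_zero b, Z, fun i => ?_⟩
  rw [hZ i, Algebra.smul_def]

include hπ in
/-- Decomposition of a nonzero element of `K` as unit × (1 or π) × square. -/
lemma K_decomp (x : K) (hx : x ≠ 0) :
    ∃ (u : Oˣ) (ε : Bool) (t : K), t ≠ 0 ∧
      x = (φ (u : O) * (if ε then φ π else 1)) * t^2 := by
  obtain ⟨p, q, hq, hpq⟩ := IsFractionRing.div_surjective (A := O) x
  have hq0 : q ≠ 0 := nonZeroDivisors.ne_zero hq
  have hp0 : p ≠ 0 := by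
    intro h
    rw [h, map_zero, zero_div] at hpq
    exact hx hpq.symm
  have hφq : φ q ≠ 0 := phi_ne_zero hq0
  have hx' : x = φ (p * q) * ((φ q)⁻¹)^2 := by
    rw [map_mul, ← hpq]
    field_simp
  obtain ⟨N, u, hu⟩ := IsDiscreteValuationRing.eq_unit_mul_pow_irreducible
    (mul_ne_zero hp0 hq0) hπ
  obtain ⟨M, hM | hM⟩ := Nat.even_or_odd' N
  · refine ⟨u, false, (φ π)^M * (φ q)⁻¹, ?_, ?_⟩
    · exact mul_ne_zero (pow_ne_zero _ (phi_ne_zero hπ.ne_zero)) (inv_ne_zero hφq)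
    · rw [if_neg (by simp), hx', hu, hM]
      push_cast [map_mul, map_pow]
      ring
  · refine ⟨u, true, (φ π)^M * (φ q)⁻¹, ?_, ?_⟩
    · exact mul_ne_zero (pow_ne_zero _ (phi_ne_zero hπ.ne_zero)) (inv_ne_zero hφq)
    · rw [if_pos rfl, hx', hu, hM]
      push_cast [map_mul, map_pow]
      ring

omit hπ in
lemma qval (a : ι₁ → Oˣ) (b : ι₂ → Oˣ) (x : ι₁ ⊕ ι₂ → K) :
    diagQF K (Sum.elim (fun i => φ (a i : O)) (fun j => φ π * φ (b j : O))) x =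
      ∑ i, φ (a i : O) * (x (Sum.inl i))^2 +
        φ π * ∑ j, φ (b j : O) * (x (Sum.inr j))^2 := by
  rw [diagQF_apply, Fintype.sum_sum_type, Finset.mul_sum]
  congr 1
  exact Finset.sum_congr rfl fun j _ => by simp; ring

omit hπ in
/-- Bridging: an integral value equation from a K-value equation. -/
lemma bridge (a : ι₁ → Oˣ) (b : ι₂ → Oˣ) (x : ι₁ ⊕ ι₂ → K) (v : O)
    (h : diagQF K (Sum.elim (fun i => φ (a i : O)) (fun j => φ π * φ (b j : O))) x = φ v) :
    ∃ d : O, d ≠ 0 ∧ ∃ (X : ι₁ → O) (Y : ι₂ → O),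
      (∀ i, φ d * x (Sum.inl i) = φ (X i)) ∧ (∀ j, φ d * x (Sum.inr j) = φ (Y j)) ∧
      ∑ i, (a i : O) * (X i)^2 + π * ∑ j, (b j : O) * (Y j)^2 = v * d^2 := by
  obtain ⟨d, hd, Z, hZ⟩ := clear_denom (O := O) x
  refine ⟨d, hd, Z ∘ Sum.inl, Z ∘ Sum.inr, fun i => hZ _, fun j => hZ _, ?_⟩
  apply IsFractionRing.injective O K
  rw [qval] at h
  push_cast [map_add, map_mul, map_sum, map_pow]
  simp only [Function.comp]
  have hA : ∑ i, φ (a i : O) * (φ (Z (Sum.inl i)))^2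
      = ∑ i, (φ d)^2 * (φ (a i : O) * (x (Sum.inl i))^2) :=
    Finset.sum_congr rfl fun i _ => by rw [← hZ (Sum.inl i)]; ring
  have hB : ∑ j, φ (b j : O) * (φ (Z (Sum.inr j)))^2
      = ∑ j, (φ d)^2 * (φ (b j : O) * (x (Sum.inr j))^2) :=
    Finset.sum_congr rfl fun j _ => by rw [← hZ (Sum.inr j)]; ring
  rw [hA, hB, ← Finset.mul_sum, ← Finset.mul_sum]
  linear_combination (φ d)^2 * h

end K
section Main
variable {O : Type*} [CommRing O] [IsDomain O] [IsDiscreteValuationRing O]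
  [IsAdicComplete (IsLocalRing.maximalIdeal O) O]
  {K : Type*} [Field K] [Algebra O K] [IsFractionRing O K]
  {ι₁ ι₂ : Type*} [Fintype ι₁] [Fintype ι₂]
  {π : O} (hπ : Irreducible π)

local notation "k" => ResidueField O
local notation "ρ" => residue O
local notation "φ" => algebraMap O K

include hπ

lemma pi_mem_max : π ∈ maximalIdeal O := (mem_maximalIdeal π).mpr hπ.not_isUnit

lemma main_anis (a : ι₁ → Oˣ) (b : ι₂ → Oˣ)
    (ha : (diagQF k fun i => ρ (a i : O)).Anisotropic)
    (hb : (diagQF k fun j => ρ (b j : O)).Anisotropic) :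
    (diagQF K (Sum.elim (fun i => φ (a i : O)) (fun j => φ π * φ (b j : O)))).Anisotropic := by
  intro x hx
  have h0 : diagQF K (Sum.elim (fun i => φ (a i : O)) (fun j => φ π * φ (b j : O))) x
      = φ (0 : O) := by rw [hx, map_zero]
  obtain ⟨d, hd, X, Y, hX, hY, heq⟩ := bridge a b x 0 h0
  rw [zero_mul] at heq
  have hX0 : ∀ i, X i = 0 := fun i =>
    eq_zero_of_pow_dvd hπ _ (fun n => (descent_zero hπ a b ha hb n X Y heq).1 i)
  have hY0 : ∀ j, Y j = 0 := fun j =>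
    eq_zero_of_pow_dvd hπ _ (fun n => (descent_zero hπ a b ha hb n X Y heq).2 j)
  funext l
  cases l with
  | inl i =>
    have := hX i
    rw [hX0 i, map_zero] at this
    exact (mul_eq_zero.mp this).resolve_left (phi_ne_zero hd)
  | inr j =>
    have := hY j
    rw [hY0 j, map_zero] at this
    exact (mul_eq_zero.mp this).resolve_left (phi_ne_zero hd)

omit hπ in
lemma main_anis_rev (h2 : (2 : k) ≠ 0) (a : ι₁ → Oˣ) (b : ι₂ → Oˣ)
    (hq : (diagQF K (Sum.elim (fun i => φ (a i : O))
      (fun j => φ π * φ (b j : O)))).Anisotropic) :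
    (diagQF k fun i => ρ (a i : O)).Anisotropic ∧
      (diagQF k fun j => ρ (b j : O)).Anisotropic := by
  constructor
  · intro v hv
    by_contra hv0
    obtain ⟨i₀, hi₀⟩ := Function.ne_iff.mp hv0
    have hsum : ∑ i, ρ (a i : O) * (v i)^2 = ρ (0 : O) := by
      rw [map_zero, ← diagQF_apply]; exact hv
    obtain ⟨X, hXsum, hXm⟩ := hensel_lift h2 a 0 v i₀ hi₀ hsum
    have hz : diagQF K (Sum.elim (fun i => φ (a i : O)) (fun j => φ π * φ (b j : O)))
        (Sum.elim (fun i => φ (X i)) 0) = 0 := by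
      rw [qval]
      have h1 : ∑ i, φ (a i : O) * ((Sum.elim (fun i => φ (X i)) (0 : ι₂ → K)) (Sum.inl i))^2
          = φ (∑ i, (a i : O) * (X i)^2) := by
        rw [map_sum]
        exact Finset.sum_congr rfl fun i _ => by rw [map_mul, map_pow]; rfl
      rw [h1, hXsum, map_zero]
      simp
    have := hq _ hz
    have h0 : φ (X i₀) = 0 := by
      have := congrFun this (Sum.inl i₀)
      simpa using this
    exact hXm (by rw [phi_inj (h0.trans (map_zero _).symm)]; exact zero_mem _)
  · intro v hv
    by_contra hv0
    obtain ⟨j₀, hj₀⟩ := Function.ne_iff.mp hv0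
    have hsum : ∑ j, ρ (b j : O) * (v j)^2 = ρ (0 : O) := by
      rw [map_zero, ← diagQF_apply]; exact hv
    obtain ⟨Y, hYsum, hYm⟩ := hensel_lift h2 b 0 v j₀ hj₀ hsum
    have hz : diagQF K (Sum.elim (fun i => φ (a i : O)) (fun j => φ π * φ (b j : O)))
        (Sum.elim 0 (fun j => φ (Y j))) = 0 := by
      rw [qval]
      have h1 : ∑ j, φ (b j : O) * ((Sum.elim (0 : ι₁ → K) (fun j => φ (Y j))) (Sum.inr j))^2
          = φ (∑ j, (b j : O) * (Y j)^2) := by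
        rw [map_sum]
        exact Finset.sum_congr rfl fun j _ => by rw [map_mul, map_pow]; rfl
      rw [h1, hYsum, map_zero, mul_zero]
      simp
    have := hq _ hz
    have h0 : φ (Y j₀) = 0 := by
      have := congrFun this (Sum.inr j₀)
      simpa using this
    exact hYm (by rw [phi_inj (h0.trans (map_zero _).symm)]; exact zero_mem _)

lemma main_univ (h2 : (2 : k) ≠ 0) (a : ι₁ → Oˣ) (b : ι₂ → Oˣ)
    (hqa : QFUniversal (diagQF k fun i => ρ (a i : O)))
    (hqb : QFUniversal (diagQF k fun j => ρ (b j : O))) :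
    QFUniversal (diagQF K (Sum.elim (fun i => φ (a i : O)) (fun j => φ π * φ (b j : O)))) := by
  intro v hv
  obtain ⟨u, ε, t, ht, hvdec⟩ := K_decomp hπ v hv
  cases ε with
  | false =>
    obtain ⟨xb, hxb⟩ := hqa (ρ (u : O)) (res_unit_ne_zero u)
    have hex : ∃ i₀, xb i₀ ≠ 0 := by
      by_contra h
      push_neg at h
      apply res_unit_ne_zero u
      rw [← hxb, diagQF_apply]
      exact Finset.sum_eq_zero fun i _ => by rw [h i]; ring
    obtain ⟨i₀, hi₀⟩ := hex
    have hsum : ∑ i, ρ (a i : O) * (xb i)^2 = ρ (u : O) := by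
      rw [← diagQF_apply]; exact hxb
    obtain ⟨X, hX, -⟩ := hensel_lift h2 a (u : O) xb i₀ hi₀ hsum
    refine ⟨t • Sum.elim (fun i => φ (X i)) 0, ?_⟩
    rw [QuadraticMap.map_smul]
    have hz : diagQF K (Sum.elim (fun i => φ (a i : O)) (fun j => φ π * φ (b j : O)))
        (Sum.elim (fun i => φ (X i)) 0) = φ (u : O) := by
      rw [qval]
      have h1 : ∑ i, φ (a i : O) * ((Sum.elim (fun i => φ (X i)) (0 : ι₂ → K)) (Sum.inl i))^2
          = φ (∑ i, (a i : O) * (X i)^2) := by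
        rw [map_sum]
        exact Finset.sum_congr rfl fun i _ => by rw [map_mul, map_pow]; rfl
      rw [h1, hX]
      simp
    rw [hz, hvdec, if_neg (by simp)]
    rw [smul_eq_mul]
    ring
  | true =>
    obtain ⟨yb, hyb⟩ := hqb (ρ (u : O)) (res_unit_ne_zero u)
    have hex : ∃ j₀, yb j₀ ≠ 0 := by
      by_contra h
      push_neg at h
      apply res_unit_ne_zero u
      rw [← hyb, diagQF_apply]
      exact Finset.sum_eq_zero fun j _ => by rw [h j]; ring
    obtain ⟨j₀, hj₀⟩ := hex
    have hsum : ∑ j, ρ (b j : O) * (yb j)^2 = ρ (u : O) := by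
      rw [← diagQF_apply]; exact hyb
    obtain ⟨Y, hY, -⟩ := hensel_lift h2 b (u : O) yb j₀ hj₀ hsum
    refine ⟨t • Sum.elim (0 : ι₁ → K) (fun j => φ (Y j)), ?_⟩
    rw [QuadraticMap.map_smul]
    have hz : diagQF K (Sum.elim (fun i => φ (a i : O)) (fun j => φ π * φ (b j : O)))
        (Sum.elim 0 (fun j => φ (Y j))) = φ π * φ (u : O) := by
      rw [qval]
      have h1 : ∑ j, φ (b j : O) * ((Sum.elim (0 : ι₁ → K) (fun j => φ (Y j))) (Sum.inr j))^2
          = φ (∑ j, (b j : O) * (Y j)^2) := by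
        rw [map_sum]
        exact Finset.sum_congr rfl fun j _ => by rw [map_mul, map_pow]; rfl
      rw [h1, hY]
      simp
    rw [hz, hvdec, if_pos rfl]
    rw [smul_eq_mul]
    ring

lemma main_univ_rev (a : ι₁ → Oˣ) (b : ι₂ → Oˣ)
    (ha : (diagQF k fun i => ρ (a i : O)).Anisotropic)
    (hb : (diagQF k fun j => ρ (b j : O)).Anisotropic)
    (hq : QFUniversal (diagQF K (Sum.elim (fun i => φ (a i : O))
      (fun j => φ π * φ (b j : O))))) :
    QFUniversal (diagQF k fun i => ρ (a i : O)) ∧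
      QFUniversal (diagQF k fun j => ρ (b j : O)) := by
  have lift_unit : ∀ vb : ResidueField O, vb ≠ 0 → ∃ w : Oˣ, ρ (w : O) = vb := by
    intro vb hvb
    obtain ⟨w₀, hw₀⟩ := Ideal.Quotient.mk_surjective (I := maximalIdeal O) vb
    have hw₀' : ρ w₀ = vb := hw₀
    have : IsUnit w₀ := (residue_ne_zero_iff_isUnit _).mp (by rw [hw₀']; exact hvb)
    exact ⟨this.unit, by rw [IsUnit.unit_spec]; exact hw₀'⟩
  constructor
  · intro vb hvb
    obtain ⟨w, hw⟩ := lift_unit vb hvb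
    obtain ⟨z, hz⟩ := hq (φ (w : O)) (phi_ne_zero (Units.ne_zero w))
    obtain ⟨d, hd, X, Y, -, -, heq⟩ := bridge a b z (w : O) hz
    obtain ⟨M, u₂, hdu⟩ := IsDiscreteValuationRing.eq_unit_mul_pow_irreducible hd hπ
    have heq' : ∑ i, (a i : O) * (X i)^2 + π * ∑ j, (b j : O) * (Y j)^2
        = ((w : O) * (u₂ : O)^2) * π^(2*M) := by
      rw [heq, hdu]; ring
    obtain ⟨X', Y', h'⟩ := descent_val hπ a b ha hb _ M X Y heq'
    have hres : ∑ i, ρ (a i : O) * (ρ (X' i))^2 = ρ ((w : O) * (u₂ : O)^2) := by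
      rw [← res_sum_sq, ← h', map_add, map_mul,
        (residue_eq_zero_iff π).mpr (pi_mem_max hπ), zero_mul, add_zero]
    have hu₂ : ρ (u₂ : O) ≠ 0 := res_unit_ne_zero u₂
    refine ⟨fun i => (ρ (u₂ : O))⁻¹ * ρ (X' i), ?_⟩
    rw [diagQF_apply]
    have : ∑ i, ρ (a i : O) * ((ρ (u₂ : O))⁻¹ * ρ (X' i))^2
        = ((ρ (u₂ : O))⁻¹)^2 * ∑ i, ρ (a i : O) * (ρ (X' i))^2 := by
      rw [Finset.mul_sum]
      exact Finset.sum_congr rfl fun i _ => by ring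
    rw [this, hres, map_mul, map_pow, hw]
    field_simp
  · intro vb hvb
    obtain ⟨w, hw⟩ := lift_unit vb hvb
    obtain ⟨z, hz⟩ := hq (φ π * φ (w : O))
      (mul_ne_zero (phi_ne_zero hπ.ne_zero) (phi_ne_zero (Units.ne_zero w)))
    rw [← map_mul] at hz
    obtain ⟨d, hd, X, Y, -, -, heq⟩ := bridge a b z (π * (w : O)) hz
    obtain ⟨M, u₂, hdu⟩ := IsDiscreteValuationRing.eq_unit_mul_pow_irreducible hd hπ
    have heq' : ∑ i, (a i : O) * (X i)^2 + π * ∑ j, (b j : O) * (Y j)^2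
        = ((w : O) * (u₂ : O)^2 * π) * π^(2*M) := by
      rw [heq, hdu]; ring
    obtain ⟨X', Y', h'⟩ := descent_val hπ a b ha hb _ M X Y heq'
    have hXm : ∀ i, X' i ∈ maximalIdeal O := by
      apply coords_mem_max a ha
      rw [mem_max_iff_dvd hπ]
      have : ∑ i, (a i : O) * (X' i)^2
          = (w : O) * (u₂ : O)^2 * π - π * ∑ j, (b j : O) * (Y' j)^2 := by
        linear_combination h'
      rw [this]
      exact dvd_sub ⟨(w : O) * (u₂ : O)^2, by ring⟩ (dvd_mul_right π _)
    choose X'' hX'' using fun i => (mem_max_iff_dvd hπ).mp (hXm i)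
    have hcancel : π * (π * ∑ i, (a i : O) * (X'' i)^2 + ∑ j, (b j : O) * (Y' j)^2)
        = π * ((w : O) * (u₂ : O)^2) := by
      have hXX : ∑ i, (a i : O) * (X' i)^2 = π^2 * ∑ i, (a i : O) * (X'' i)^2 := by
        rw [Finset.mul_sum]
        exact Finset.sum_congr rfl fun i _ => by rw [hX'' i]; ring
      linear_combination h' - hXX
    have h2' := mul_left_cancel₀ hπ.ne_zero hcancel
    have hres : ∑ j, ρ (b j : O) * (ρ (Y' j))^2 = ρ ((w : O) * (u₂ : O)^2) := by
      rw [← res_sum_sq, ← h2', map_add, map_mul,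
        (residue_eq_zero_iff π).mpr (pi_mem_max hπ), zero_mul, zero_add]
    have hu₂ : ρ (u₂ : O) ≠ 0 := res_unit_ne_zero u₂
    refine ⟨fun j => (ρ (u₂ : O))⁻¹ * ρ (Y' j), ?_⟩
    rw [diagQF_apply]
    have : ∑ j, ρ (b j : O) * ((ρ (u₂ : O))⁻¹ * ρ (Y' j))^2
        = ((ρ (u₂ : O))⁻¹)^2 * ∑ j, ρ (b j : O) * (ρ (Y' j))^2 := by
      rw [Finset.mul_sum]
      exact Finset.sum_congr rfl fun j _ => by ring
    rw [this, hres, map_mul, map_pow, hw]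
    field_simp

end Main
section Assembly

lemma two_ne_zero_of_ringChar {k : Type*} [Field k] (h : ringChar k ≠ 2) : (2 : k) ≠ 0 := by
  intro h0
  have hd : ringChar k ∣ 2 := ringChar.dvd (by exact_mod_cast h0)
  rcases (Nat.prime_two.eq_one_or_self_of_dvd _ hd) with h1 | h2
  · exact CharP.ringChar_ne_one h1
  · exact h h2

lemma res_unit_lift {O : Type*} [CommRing O] [IsLocalRing O] (vb : IsLocalRing.ResidueField O)
    (hvb : vb ≠ 0) : ∃ w : Oˣ, IsLocalRing.residue O (w : O) = vb := by
  obtain ⟨w₀, hw₀⟩ := Ideal.Quotient.mk_surjective (I := IsLocalRing.maximalIdeal O) vb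
  have hw₀' : IsLocalRing.residue O w₀ = vb := hw₀
  have : IsUnit w₀ := (IsLocalRing.residue_ne_zero_iff_isUnit _).mp (by rw [hw₀']; exact hvb)
  exact ⟨this.unit, by rw [IsUnit.unit_spec]; exact hw₀'⟩

/-- If `K` is a complete discretely valued field (fraction field of a complete
discrete valuation ring `O`) with residue field `k` of characteristic `≠ 2`, then
`AU(K) = {r₁ + r₂ | r₁, r₂ ∈ AU(k)}`. -/
theorem stmt1 (O K : Type*) [CommRing O] [IsDomain O] [IsDiscreteValuationRing O]
    [IsAdicComplete (IsLocalRing.maximalIdeal O) O]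
    [Field K] [Algebra O K] [IsFractionRing O K]
    (hchar : ringChar (IsLocalRing.ResidueField O) ≠ 2) :
    AUSet K = {r | ∃ r₁ ∈ AUSet (IsLocalRing.ResidueField O),
      ∃ r₂ ∈ AUSet (IsLocalRing.ResidueField O), r = r₁ + r₂} := by
  classical
  have h2 : (2 : IsLocalRing.ResidueField O) ≠ 0 := two_ne_zero_of_ringChar hchar
  obtain ⟨π, hπ⟩ := IsDiscreteValuationRing.exists_irreducible O
  ext n
  simp only [Set.mem_setOf_eq]
  constructor
  · rintro ⟨c, hca, hcu⟩
    -- decompose each entry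
    have hdec : ∀ i, ∃ (u : Oˣ) (ε : Bool) (t : K), t ≠ 0 ∧
        (c i : K) = (algebraMap O K (u : O) * (if ε then algebraMap O K π else 1)) * t^2 :=
      fun i => K_decomp hπ (c i : K) (Units.ne_zero (c i))
    choose u ε t ht hdec using hdec
    set d : Fin n → K := fun i => algebraMap O K (u i : O) * (if ε i then algebraMap O K π else 1)
      with hd
    have hde : (fun i => d i * (t i)^2) = fun i => (c i : K) := funext fun i => (hdec i).symm
    have hscale := diagQF_scale d t ht
    have hAd : (diagQF K d).Anisotropic := by
      apply hscale.1.mpr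
      rw [show (fun i => d i * (t i)^2) = fun i => (c i : K) from hde]
      exact hca
    have hUd : QFUniversal (diagQF K d) := by
      apply hscale.2.mpr
      rw [show (fun i => d i * (t i)^2) = fun i => (c i : K) from hde]
      exact hcu
    -- split indices
    set p : Fin n → Prop := fun i => ε i = false with hp
    set e : {i // p i} ⊕ {i // ¬ p i} ≃ Fin n := Equiv.sumCompl p with he
    set a : {i // p i} → Oˣ := fun i => u i.1 with ha
    set b : {i // ¬ p i} → Oˣ := fun j => u j.1 with hb
    have hfun : d ∘ e = Sum.elim (fun i => algebraMap O K (a i : O))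
        (fun j => algebraMap O K π * algebraMap O K (b j : O)) := by
      funext l
      cases l with
      | inl i =>
        have : ε i.1 = false := i.2
        simp [d, e, a, Equiv.sumCompl, this]
      | inr j =>
        have : ε j.1 = true := by
          have := j.2
          simp only [p, Bool.not_eq_false] at this
          exact this
        simp [d, e, b, Equiv.sumCompl, this, mul_comm]
    have hre := diagQF_reindex e d
    have hAs : (diagQF K (Sum.elim (fun i => algebraMap O K (a i : O))
        (fun j => algebraMap O K π * algebraMap O K (b j : O)))).Anisotropic := by
      rw [← hfun]; exact hre.1.mp hAd
    have hUs : QFUniversal (diagQF K (Sum.elim (fun i => algebraMap O K (a i : O))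
        (fun j => algebraMap O K π * algebraMap O K (b j : O)))) := by
      rw [← hfun]; exact hre.2.mp hUd
    -- to residue forms
    obtain ⟨hka, hkb⟩ := main_anis_rev (K := K) h2 a b hAs
    obtain ⟨hkua, hkub⟩ := main_univ_rev hπ a b hka hkb hUs
    -- to AUSet k
    refine ⟨Fintype.card {i // p i}, ?_, Fintype.card {i // ¬ p i}, ?_, ?_⟩
    · set e₁ := (Fintype.equivFin {i // p i}).symm
      have hre₁ := diagQF_reindex e₁ (fun i => IsLocalRing.residue O (a i : O))
      refine ⟨fun l => Units.mk0 (IsLocalRing.residue O (a (e₁ l) : O))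
        (res_unit_ne_zero _), ?_, ?_⟩
      · exact hre₁.1.mp hka
      · exact hre₁.2.mp hkua
    · set e₂ := (Fintype.equivFin {i // ¬ p i}).symm
      have hre₂ := diagQF_reindex e₂ (fun j => IsLocalRing.residue O (b j : O))
      refine ⟨fun l => Units.mk0 (IsLocalRing.residue O (b (e₂ l) : O))
        (res_unit_ne_zero _), ?_, ?_⟩
      · exact hre₂.1.mp hkb
      · exact hre₂.2.mp hkub
    · calc n = Fintype.card (Fin n) := (Fintype.card_fin n).symm
        _ = Fintype.card ({i // p i} ⊕ {i // ¬ p i}) := (Fintype.card_congr e).symm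
        _ = Fintype.card {i // p i} + Fintype.card {i // ¬ p i} := Fintype.card_sum
  · rintro ⟨r₁, ⟨ab, haa, hau⟩, r₂, ⟨bb, hba, hbu⟩, rfl⟩
    -- lift units
    choose a haρ using fun i => res_unit_lift (O := O) (ab i : _) (Units.ne_zero (ab i))
    choose b hbρ using fun j => res_unit_lift (O := O) (bb j : _) (Units.ne_zero (bb j))
    have haf : (fun i => IsLocalRing.residue O (a i : O))
        = fun i => ((ab i : IsLocalRing.ResidueField O)) := funext haρ
    have hbf : (fun j => IsLocalRing.residue O (b j : O))
        = fun j => ((bb j : IsLocalRing.ResidueField O)) := funext hbρ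
    have hka : (diagQF _ fun i => IsLocalRing.residue O (a i : O)).Anisotropic := by
      rw [haf]; exact haa
    have hkua : QFUniversal (diagQF _ fun i => IsLocalRing.residue O (a i : O)) := by
      rw [haf]; exact hau
    have hkb : (diagQF _ fun j => IsLocalRing.residue O (b j : O)).Anisotropic := by
      rw [hbf]; exact hba
    have hkub : QFUniversal (diagQF _ fun j => IsLocalRing.residue O (b j : O)) := by
      rw [hbf]; exact hbu
    have hAs := main_anis (K := K) hπ a b hka hkb
    have hUs := main_univ (K := K) hπ h2 a b hkua hkub
    -- transfer to Fin (r₁ + r₂)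
    set ent : Fin r₁ ⊕ Fin r₂ → K := Sum.elim (fun i => algebraMap O K (a i : O))
      (fun j => algebraMap O K π * algebraMap O K (b j : O)) with hent
    have hre := diagQF_reindex (finSumFinEquiv (m := r₁) (n := r₂)).symm ent
    have hne : ∀ l : Fin (r₁ + r₂), ent (finSumFinEquiv.symm l) ≠ 0 := by
      intro l
      cases hl : finSumFinEquiv.symm l with
      | inl i =>
        simp only [hent, hl, Sum.elim_inl]
        exact phi_ne_zero (Units.ne_zero (a i))
      | inr j =>
        simp only [hent, hl, Sum.elim_inr]
        exact mul_ne_zero (phi_ne_zero hπ.ne_zero) (phi_ne_zero (Units.ne_zero (b j)))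
    refine ⟨fun l => Units.mk0 (ent (finSumFinEquiv.symm l)) (hne l), ?_, ?_⟩
    · exact hre.1.mp hAs
    · exact hre.2.mp hUs

end Assembly
end

section
/- Let $k$ be a field of characteristic $\ne 2$ with $u_s(k) < \infty$, and let $n \geq 0$ be the largest integer such that $2^n \leq u_s(k)$. Then $m_s(k) \leq 2^n \leq u_s(k)$. -/
open scoped Multiplicative ENNReal

universe u

namespace Stmt9Aux

variable {k : Type*} [Field k]

/-- Value of a diagonal quadratic form with coefficients `c`. -/
def qV {ι : Type*} [Fintype ι] (c : ι → k) (x : ι → k) : k := ∑ i, c i * x i ^ 2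

/-- The associated bilinear value. -/
def bV {ι : Type*} [Fintype ι] (c : ι → k) (x y : ι → k) : k := ∑ i, c i * (x i * y i)

lemma qV_zero {ι : Type*} [Fintype ι] (c : ι → k) : qV c (0 : ι → k) = 0 := by
  simp [qV]

lemma qV_smul {ι : Type*} [Fintype ι] (c : ι → k) (r : k) (x : ι → k) :
    qV c (r • x) = r ^ 2 * qV c x := by
  simp only [qV, Pi.smul_apply, smul_eq_mul, Finset.mul_sum]
  exact Finset.sum_congr rfl fun i _ => by ring

lemma qV_add_smul {ι : Type*} [Fintype ι] (c : ι → k) (x y : ι → k) (r : k) :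
    qV c (x + r • y) = qV c x + r ^ 2 * qV c y + 2 * r * bV c x y := by
  simp only [qV, bV, Pi.add_apply, Pi.smul_apply, smul_eq_mul, Finset.mul_sum,
    ← Finset.sum_add_distrib]
  exact Finset.sum_congr rfl fun i _ => by ring

/-- Coefficients of the Pfister form `⟨⟨a 0, …, a (j-1)⟩⟩`. -/
def pfc {j : ℕ} (a : Fin j → kˣ) (S : Fin j → Bool) : k :=
  ∏ i, if S i then (a i : k) else 1

/-- The same coefficients, as units. -/
def pfu {j : ℕ} (a : Fin j → kˣ) (S : Fin j → Bool) : kˣ :=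
  ∏ i, if S i then a i else 1

lemma pfu_coe {j : ℕ} (a : Fin j → kˣ) (S : Fin j → Bool) :
    ((pfu a S : kˣ) : k) = pfc a S := by
  rw [pfc, pfu, ← Units.coeHom_apply, map_prod]
  exact Finset.prod_congr rfl fun i _ => by by_cases h : S i <;> simp [h]

lemma pfc_zero (a : Fin 0 → kˣ) (S : Fin 0 → Bool) : pfc a S = 1 := by
  simp [pfc]

lemma pfc_cons {j : ℕ} (a : Fin (j + 1) → kˣ) (v : Bool) (T : Fin j → Bool) :
    pfc a (Fin.cons v T) = (if v then (a 0 : k) else 1) * pfc (fun i => a i.succ) T := by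
  rw [pfc, Fin.prod_univ_succ, pfc]
  simp

def vf {j : ℕ} (x : (Fin (j + 1) → Bool) → k) : (Fin j → Bool) → k :=
  fun T => x (Fin.cons false T)

def vt {j : ℕ} (x : (Fin (j + 1) → Bool) → k) : (Fin j → Bool) → k :=
  fun T => x (Fin.cons true T)

def glue {j : ℕ} (p q : (Fin j → Bool) → k) : (Fin (j + 1) → Bool) → k :=
  fun S => if S 0 then q (Fin.tail S) else p (Fin.tail S)

lemma vf_glue {j : ℕ} (p q : (Fin j → Bool) → k) : vf (glue p q) = p := by
  funext T; simp [vf, glue, Fin.tail_cons]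

lemma vt_glue {j : ℕ} (p q : (Fin j → Bool) → k) : vt (glue p q) = q := by
  funext T; simp [vt, glue, Fin.tail_cons]

lemma glue_vf_vt {j : ℕ} (x : (Fin (j + 1) → Bool) → k) : glue (vf x) (vt x) = x := by
  funext S
  simp only [glue, vf, vt]
  rcases hS : S 0 with _ | _
  · simp only [Bool.false_eq_true, if_false]
    rw [← hS, Fin.cons_self_tail]
  · simp only [if_true]
    rw [← hS, Fin.cons_self_tail]

lemma glue_zero {j : ℕ} : glue (0 : (Fin j → Bool) → k) 0 = 0 := by
  funext S; simp [glue]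

lemma qV_decomp {j : ℕ} (a : Fin (j + 1) → kˣ) (x : (Fin (j + 1) → Bool) → k) :
    qV (pfc a) x = qV (pfc fun i => a i.succ) (vf x)
      + (a 0 : k) * qV (pfc fun i => a i.succ) (vt x) := by
  have h : qV (pfc a) x
      = ∑ p : Bool × (Fin j → Bool), pfc a (Fin.cons p.1 p.2) * x (Fin.cons p.1 p.2) ^ 2 :=
    (Fintype.sum_equiv (Fin.consEquiv fun _ : Fin (j + 1) => Bool)
      (fun p => pfc a (Fin.cons p.1 p.2) * x (Fin.cons p.1 p.2) ^ 2)
      (fun S => pfc a S * x S ^ 2) (fun p => rfl)).symm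
  rw [h, Fintype.sum_prod_type, Fintype.sum_bool]
  simp only [pfc_cons, if_true, ite_false, Bool.false_eq_true, one_mul]
  rw [add_comm]
  congr 1
  all_goals first
    | rfl
    | (rw [qV, Finset.mul_sum]
       exact Finset.sum_congr rfl fun T _ => mul_assoc _ _ _)

lemma round : ∀ (j : ℕ) (a : Fin j → kˣ) (d : k), d ≠ 0 → (∃ w, qV (pfc a) w = d) →
    ∃ φ φ' : ((Fin j → Bool) → k) → ((Fin j → Bool) → k),
      (∀ z, qV (pfc a) (φ z) = d * qV (pfc a) z) ∧
      (∀ z, φ (φ' z) = z) ∧ (∀ z, φ' (φ z) = z) := by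
  intro j
  induction j with
  | zero =>
    rintro a d hd ⟨w, hw⟩
    have hq : ∀ x : (Fin 0 → Bool) → k, qV (pfc a) x = x default ^ 2 := by
      intro x
      rw [qV, Fintype.sum_unique, pfc_zero, one_mul]
      exact congrArg (fun y => x y ^ 2) (Subsingleton.elim _ _)
    have hr : w default ≠ 0 := by
      intro h
      apply hd
      rw [← hw, hq, h]; ring
    refine ⟨fun z => w default • z, fun z => (w default)⁻¹ • z, ?_, ?_, ?_⟩
    · intro z
      dsimp only
      rw [hq, hq, ← hw, hq]
      simp only [Pi.smul_apply, smul_eq_mul]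
      ring
    · intro z; dsimp only; rw [smul_smul, mul_inv_cancel₀ hr, one_smul]
    · intro z; dsimp only; rw [smul_smul, inv_mul_cancel₀ hr, one_smul]
  | succ j ih =>
    rintro a d hd ⟨w, hw⟩
    have dec : ∀ x, qV (pfc a) x
        = qV (pfc fun i => a i.succ) (vf x) + (a 0 : k) * qV (pfc fun i => a i.succ) (vt x) :=
      fun x => qV_decomp a x
    have hb : (a 0 : k) ≠ 0 := Units.ne_zero (a 0)
    set sv := qV (pfc fun i => a i.succ) (vf w) with hsv
    set tv := qV (pfc fun i => a i.succ) (vt w) with htv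
    have hst : sv + (a 0 : k) * tv = d := by rw [hsv, htv, ← dec w, hw]
    by_cases ht : tv = 0
    · -- second component value is zero: d = sv
      have hsd : qV (pfc fun i => a i.succ) (vf w) = d := by rw [← hsv, ← hst, ht]; ring
      obtain ⟨φ₀, φ₀', h₀, h₀l, h₀r⟩ := ih (fun i => a i.succ) d hd ⟨vf w, hsd⟩
      refine ⟨fun z => glue (φ₀ (vf z)) (φ₀ (vt z)),
              fun z => glue (φ₀' (vf z)) (φ₀' (vt z)), ?_, ?_, ?_⟩
      · intro z
        dsimp only
        rw [dec, vf_glue, vt_glue, h₀, h₀, dec z]; ring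
      · intro z
        dsimp only
        rw [vf_glue, vt_glue, h₀l, h₀l, glue_vf_vt]
      · intro z
        dsimp only
        rw [vf_glue, vt_glue, h₀r, h₀r, glue_vf_vt]
    · by_cases hs0 : sv = 0
      · -- first component value is zero: d = (a 0) * tv
        have hdt : (a 0 : k) * tv = d := by rw [← hst, hs0]; ring
        obtain ⟨ψ, ψ', hψ, hψl, hψr⟩ := ih (fun i => a i.succ) tv ht ⟨vt w, htv.symm⟩
        refine ⟨fun z => glue ((a 0 : k) • ψ (vt z)) (ψ (vf z)),
                fun z => glue (ψ' (vt z)) (ψ' (((a 0 : k))⁻¹ • vf z)), ?_, ?_, ?_⟩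
        · intro z
          dsimp only
          rw [dec, vf_glue, vt_glue, qV_smul, hψ, hψ, dec z, ← hdt]; ring
        · intro z
          dsimp only
          rw [vf_glue, vt_glue, hψl, smul_inv_smul₀ hb, hψl, glue_vf_vt]
        · intro z
          dsimp only
          rw [vf_glue, vt_glue, hψr, inv_smul_smul₀ hb, hψr, glue_vf_vt]
      · -- main case
        obtain ⟨σ, σ', hσ, hσl, hσr⟩ := ih (fun i => a i.succ) sv hs0 ⟨vf w, hsv.symm⟩
        obtain ⟨ψ, ψ', hψ, hψl, hψr⟩ := ih (fun i => a i.succ) tv ht ⟨vt w, htv.symm⟩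
        have hω : ∀ y, sv * (tv * qV (pfc fun i => a i.succ) (ψ' (σ' y)))
            = qV (pfc fun i => a i.succ) y := by
          intro y
          have h1 : qV (pfc fun i => a i.succ) (σ (ψ (ψ' (σ' y))))
              = sv * (tv * qV (pfc fun i => a i.succ) (ψ' (σ' y))) := by
            rw [hσ, hψ]
          rw [hψl, hσl] at h1
          exact h1.symm
        refine ⟨fun z => glue (σ (vf z + (-((a 0 : k) * tv)) • (ψ' (σ' (vt z)))))
                              (ψ (vf z + sv • (ψ' (σ' (vt z))))),
                fun z => glue (d⁻¹ • (sv • σ' (vf z) + ((a 0 : k) * tv) • ψ' (vt z)))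
                              (σ (ψ (d⁻¹ • (ψ' (vt z) + (-1 : k) • σ' (vf z))))), ?_, ?_, ?_⟩
        · intro z
          dsimp only
          rw [dec, vf_glue, vt_glue, hσ, hψ, qV_add_smul, qV_add_smul, dec z]
          linear_combination (qV (pfc fun i => a i.succ) (vf z)
              + (a 0 : k) * tv * sv * qV (pfc fun i => a i.succ) (ψ' (σ' (vt z)))) * hst
            + (d * (a 0 : k)) * hω (vt z)
        · intro z
          dsimp only
          rw [vf_glue, vt_glue, hσr, hψr]
          have e3 : (d⁻¹ • (sv • σ' (vf z) + ((a 0 : k) * tv) • ψ' (vt z)))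
                + (-((a 0 : k) * tv)) • (d⁻¹ • (ψ' (vt z) + (-1 : k) • σ' (vf z)))
              = d⁻¹ • (d • σ' (vf z)) := by
            rw [← hst]
            funext u
            simp only [Pi.add_apply, Pi.smul_apply, Pi.neg_apply, smul_eq_mul]
            ring
          have e4 : (d⁻¹ • (sv • σ' (vf z) + ((a 0 : k) * tv) • ψ' (vt z)))
                + sv • (d⁻¹ • (ψ' (vt z) + (-1 : k) • σ' (vf z)))
              = d⁻¹ • (d • ψ' (vt z)) := by
            rw [← hst]
            funext u
            simp only [Pi.add_apply, Pi.smul_apply, Pi.neg_apply, smul_eq_mul]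
            ring
          rw [e3, e4, inv_smul_smul₀ hd, inv_smul_smul₀ hd, hσl, hψl, glue_vf_vt]
        · intro z
          dsimp only
          rw [vf_glue, vt_glue, hσr, hψr]
          have e1 : d⁻¹ • (sv • (vf z + (-((a 0 : k) * tv)) • (ψ' (σ' (vt z))))
                + ((a 0 : k) * tv) • (vf z + sv • (ψ' (σ' (vt z)))))
              = d⁻¹ • (d • vf z) := by
            rw [← hst]
            funext u
            simp only [Pi.add_apply, Pi.smul_apply, Pi.neg_apply, smul_eq_mul]
            ring
          have e2 : d⁻¹ • ((vf z + sv • (ψ' (σ' (vt z))))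
                + (-1 : k) • (vf z + (-((a 0 : k) * tv)) • (ψ' (σ' (vt z)))))
              = d⁻¹ • (d • (ψ' (σ' (vt z)))) := by
            rw [← hst]
            funext u
            simp only [Pi.add_apply, Pi.smul_apply, Pi.neg_apply, smul_eq_mul]
            ring
          rw [e1, e2, inv_smul_smul₀ hd, inv_smul_smul₀ hd, hψl, hσl, glue_vf_vt]

lemma aniso_zero : ∀ x : (Fin 0 → Bool) → k, qV (pfc (Fin.elim0 : Fin 0 → kˣ)) x = 0 → x = 0 := by
  intro x hx
  rw [qV, Fintype.sum_unique, pfc_zero, one_mul] at hx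
  have h0 := (pow_eq_zero_iff (two_ne_zero : (2 : ℕ) ≠ 0)).mp hx
  funext S
  exact (congrArg x (Subsingleton.elim _ _)).trans h0

lemma pf_univ {j : ℕ} (a : Fin j → kˣ)
    (han : ∀ x, qV (pfc a) x = 0 → x = 0)
    (hmax : ∀ b : Fin (j + 1) → kˣ, ∃ x, qV (pfc b) x = 0 ∧ x ≠ 0) :
    ∀ e : k, e ≠ 0 → ∃ x, qV (pfc a) x = e := by
  intro e he
  set u : kˣ := Units.mk0 (-e) (neg_ne_zero.mpr he) with hu0
  obtain ⟨x, hx0, hxne⟩ := hmax (Fin.cons u a)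
  have hsucc : (fun i => (Fin.cons u a : Fin (j + 1) → kˣ) i.succ) = a :=
    funext fun i => Fin.cons_succ _ _ i
  rw [qV_decomp, hsucc, Fin.cons_zero] at hx0
  have hval : (u : k) = -e := rfl
  rw [hval] at hx0
  by_cases htz : qV (pfc a) (vt x) = 0
  · exfalso
    have h1 : qV (pfc a) (vf x) = 0 := by
      rw [htz, mul_zero, add_zero] at hx0; exact hx0
    apply hxne
    rw [← glue_vf_vt x, han _ h1, han _ htz, glue_zero]
  · have hfz : qV (pfc a) (vf x) = e * qV (pfc a) (vt x) := by linear_combination hx0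
    have hfne : qV (pfc a) (vf x) ≠ 0 := by
      rw [hfz]; exact mul_ne_zero he htz
    obtain ⟨φ, φ', hφ, -, -⟩ := round j a _ hfne ⟨vf x, rfl⟩
    refine ⟨φ ((qV (pfc a) (vt x))⁻¹ • vt x), ?_⟩
    rw [hφ, qV_smul, hfz]
    field_simp

lemma diag_apply {ι : Type*} [Fintype ι] (c : ι → k) (x : ι → k) :
    diagQF k c x = qV c x := by
  simp only [diagQF, QuadraticMap.weightedSumSquares_apply, qV, smul_eq_mul]
  exact Finset.sum_congr rfl fun i _ => by ring

lemma transport {j : ℕ} (a : Fin j → kˣ) :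
    ∃ A : Fin (2 ^ j) → kˣ,
      ((∀ x, qV (pfc a) x = 0 → x = 0) → (diagQF k fun i => (A i : k)).Anisotropic) ∧
      ((∀ e : k, e ≠ 0 → ∃ x, qV (pfc a) x = e) → QFUniversal (diagQF k fun i => (A i : k))) := by
  have hcard : Fintype.card (Fin j → Bool) = 2 ^ j := by
    rw [Fintype.card_fun, Fintype.card_bool, Fintype.card_fin]
  let E : (Fin j → Bool) ≃ Fin (2 ^ j) := Fintype.equivFinOfCardEq hcard
  have key : ∀ x : Fin (2 ^ j) → k,
      diagQF k (fun i => ((pfu a (E.symm i) : kˣ) : k)) x = qV (pfc a) (fun T => x (E T)) := by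
    intro x
    rw [diag_apply]
    refine Fintype.sum_equiv E.symm _ _ fun i => ?_
    dsimp only
    rw [Equiv.apply_symm_apply, pfu_coe]
  refine ⟨fun i => pfu a (E.symm i), ?_, ?_⟩
  · intro han x hx
    rw [key] at hx
    have h0 : (fun T => x (E T)) = 0 := han _ hx
    funext i
    have := congrFun h0 (E.symm i)
    simpa using this
  · intro hu e he
    obtain ⟨y, hy⟩ := hu e he
    refine ⟨fun i => y (E.symm i), ?_⟩
    rw [key]
    have : (fun T => y (E.symm (E T))) = y := funext fun T => by rw [Equiv.symm_apply_apply]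
    rw [this, hy]

end Stmt9Aux

open Stmt9Aux in
/-- Let `k` be a field of characteristic `≠ 2` with `u_s(k) < ∞`, and let
`n ≥ 0` be the largest integer with `2 ^ n ≤ u_s(k)`. Then `m_s(k) ≤ 2 ^ n ≤ u_s(k)`. -/
theorem stmt9 (k : Type u) [Field k] (hchar : ringChar k ≠ 2)
    (hfin : uS k ≠ ⊤) (n : ℕ)
    (h1 : (2 : ℝ≥0∞) ^ n ≤ uS k)
    (h2 : ∀ m : ℕ, (2 : ℝ≥0∞) ^ m ≤ uS k → m ≤ n) :
    mS k ≤ 2 ^ n ∧ (2 : ℝ≥0∞) ^ n ≤ uS k := by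
  refine ⟨?_, h1⟩
  have hu : (uInv k : ℝ≥0∞) ≤ uS k := by
    apply le_sInf
    rintro r ⟨hr1, -⟩
    exact hr1 k inferInstance
  have keyPS : ∀ j : ℕ, (∃ a : Fin j → kˣ, ∀ x, qV (pfc a) x = 0 → x = 0) → j ≤ n := by
    intro j hj
    obtain ⟨a, ha⟩ := hj
    obtain ⟨A, hA, -⟩ := transport a
    have h2j : (2 ^ j : ℕ) ∈ {n : ℕ | ∃ a : Fin n → kˣ, (diagQF k fun i => (a i : k)).Anisotropic} :=
      ⟨A, hA ha⟩
    have hle : ((2 ^ j : ℕ) : ℕ∞) ≤ uInv k := le_sSup ⟨2 ^ j, h2j, rfl⟩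
    have h3 : ((2 ^ j : ℕ) : ℝ≥0∞) ≤ (uInv k : ℝ≥0∞) := by
      rw [← ENat.toENNReal_coe]
      exact ENat.toENNReal_le.mpr hle
    apply h2
    calc (2 : ℝ≥0∞) ^ j = ((2 ^ j : ℕ) : ℝ≥0∞) := by push_cast; ring
      _ ≤ (uInv k : ℝ≥0∞) := h3
      _ ≤ uS k := hu
  set PS : Set ℕ := {j | ∃ a : Fin j → kˣ, ∀ x : (Fin j → Bool) → k, qV (pfc a) x = 0 → x = 0}
    with hPS
  have h0 : 0 ∈ PS := ⟨Fin.elim0, aniso_zero⟩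
  have hne : PS.Nonempty := ⟨0, h0⟩
  have hbdd : BddAbove PS := ⟨n, fun j hj => keyPS j hj⟩
  obtain ⟨a, ha⟩ := Nat.sSup_mem hne hbdd
  have hjn : sSup PS ≤ n := keyPS _ ⟨a, ha⟩
  have hnotmem : ∀ b : Fin (sSup PS + 1) → kˣ, ∃ x, qV (pfc b) x = 0 ∧ x ≠ 0 := by
    intro bb
    by_contra hcon
    push_neg at hcon
    have : sSup PS + 1 ∈ PS := ⟨bb, hcon⟩
    have := le_csSup hbdd this
    omega
  have huniv := pf_univ a ha hnotmem
  obtain ⟨A, hAa, hAu⟩ := transport a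
  have hAU : (2 ^ (sSup PS) : ℕ) ∈ AUSet k := ⟨A, hAa ha, hAu huniv⟩
  have hminv : mInv k ≤ ((2 ^ (sSup PS) : ℕ) : ℕ∞) := sInf_le ⟨2 ^ (sSup PS), hAU, rfl⟩
  apply sSup_le
  rintro r ⟨m, hm, rfl⟩
  show (m : ℝ≥0∞) ≤ 2 ^ n
  have hm1 : (m : ℕ∞) ≤ mInv k := (hm k inferInstance).1
  have hm2 : (m : ℕ∞) ≤ ((2 ^ (sSup PS) : ℕ) : ℕ∞) := hm1.trans hminv
  have hm3 : m ≤ 2 ^ (sSup PS) := by exact_mod_cast hm2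
  have hm4 : m ≤ 2 ^ n := hm3.trans (Nat.pow_le_pow_right (by norm_num) hjn)
  calc (m : ℝ≥0∞) ≤ ((2 ^ n : ℕ) : ℝ≥0∞) := by exact_mod_cast hm4
    _ = 2 ^ n := by push_cast; ring
end

section
/- Let $k$ be a field of characteristic $\ne 2$ such that $m_s(k) = u_s(k) < \infty$. Then $m_s(k) = u_s(k) = 2^n$ for some integer $n \geq 0$, and for all finite field extensions $k'/k$: (a) $m(k') = u(k') = 2^n$, and (b) $m(k'(t)) = u(k'(t)) = 2^{n+1}$, where $k'(t)$ is the rational function field in one variable over $k'$. -/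
open scoped Multiplicative ENNReal

universe u

section DiagVals

variable {F : Type*} [Field F]

/-- Abbreviation for the diagonal quadratic form with unit coefficients. -/
noncomputable abbrev dQ {n : ℕ} (p : Fin n → Fˣ) : QuadraticForm F (Fin n → F) :=
  diagQF F fun i => (p i : F)

lemma dQ_apply {n : ℕ} (p : Fin n → Fˣ) (x : Fin n → F) :
    dQ p x = ∑ i, (p i : F) * (x i * x i) := by
  simp [diagQF, QuadraticMap.weightedSumSquares_apply, smul_eq_mul]

/-- `a` is represented (possibly trivially) by the diagonal form `p`. -/
def DRep {n : ℕ} (p : Fin n → Fˣ) (a : F) : Prop :=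
  ∃ x, dQ p x = a

lemma rep_zero {n : ℕ} (p : Fin n → Fˣ) : DRep p 0 :=
  ⟨0, map_zero _⟩

lemma rep_sq_mul {n : ℕ} {p : Fin n → Fˣ} {a : F} (c : F) (h : DRep p a) :
    DRep p (c ^ 2 * a) := by
  obtain ⟨x, hx⟩ := h
  exact ⟨c • x, by rw [QuadraticMap.map_smul, smul_eq_mul, hx]; ring⟩

lemma rep_inv {n : ℕ} {p : Fin n → Fˣ} {a : F} (h : DRep p a) : DRep p a⁻¹ := by
  rcases eq_or_ne a 0 with rfl | ha
  · simpa using rep_zero p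
  · have := rep_sq_mul a⁻¹ h
    rwa [show (a⁻¹) ^ 2 * a = a⁻¹ by field_simp] at this

lemma dQ_add_smul {n : ℕ} (p : Fin n → Fˣ) (s t : Fin n → F) (e : F) :
    dQ p (s + e • t) = dQ p s + e ^ 2 * dQ p t + e * ∑ i, 2 * (p i : F) * s i * t i := by
  simp only [dQ_apply, Finset.mul_sum]
  rw [← Finset.sum_add_distrib, ← Finset.sum_add_distrib]
  refine Finset.sum_congr rfl fun i _ => ?_
  simp only [Pi.add_apply, Pi.smul_apply, smul_eq_mul]
  ring

/-- The key "round form" identity, characteristic-free. -/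
lemma magic {n : ℕ} (p : Fin n → Fˣ) (x y c : F) (s t : Fin n → F) :
    x * dQ p (s + (c * y) • t) + (c * y) * dQ p (s + (-x) • t)
      = (x + c * y) * dQ p s + ((x + c * y) * (c * (x * y))) * dQ p t := by
  rw [dQ_add_smul, dQ_add_smul]
  ring

end DiagVals
set_option linter.unusedSectionVars false
section Append

variable {F : Type*} [Field F]

lemma exists_append_decomp {m n : ℕ} (z : Fin (m + n) → F) :
    ∃ (x : Fin m → F) (y : Fin n → F), z = Fin.append x y := by
  refine ⟨fun i => z (Fin.castAdd n i), fun j => z (Fin.natAdd m j), ?_⟩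
  funext i
  refine Fin.addCases (fun j => ?_) (fun j => ?_) i
  · rw [Fin.append_left]
  · rw [Fin.append_right]

lemma dQ_append {m n : ℕ} (p : Fin m → Fˣ) (q : Fin n → Fˣ) (x : Fin m → F) (y : Fin n → F) :
    dQ (Fin.append p q) (Fin.append x y) = dQ p x + dQ q y := by
  simp only [dQ_apply]
  rw [Fin.sum_univ_add]
  congr 1
  · refine Finset.sum_congr rfl fun i _ => ?_
    rw [Fin.append_left, Fin.append_left]
  · refine Finset.sum_congr rfl fun i _ => ?_
    rw [Fin.append_right, Fin.append_right]

lemma dQ_unit_smul {n : ℕ} (c : Fˣ) (p : Fin n → Fˣ) (x : Fin n → F) :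
    dQ (fun i => c * p i) x = (c : F) * dQ p x := by
  simp only [dQ_apply, Finset.mul_sum, Units.val_mul]
  exact Finset.sum_congr rfl fun i _ => by ring

lemma append_eq_zero_iff {m n : ℕ} (x : Fin m → F) (y : Fin n → F) :
    Fin.append x y = 0 ↔ x = 0 ∧ y = 0 := by
  constructor
  · intro h
    constructor
    · funext i
      have := congrFun h (Fin.castAdd n i)
      rwa [Fin.append_left] at this
    · funext j
      have := congrFun h (Fin.natAdd m j)
      rwa [Fin.append_right] at this
  · rintro ⟨rfl, rfl⟩
    funext i
    refine Fin.addCases (fun j => ?_) (fun j => ?_) i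
    · rw [Fin.append_left]; rfl
    · rw [Fin.append_right]; rfl

/-- Values of the doubled form `p ⟂ c·p`. -/
lemma drep_double_iff {m : ℕ} (p : Fin m → Fˣ) (c : Fˣ) (a : F) :
    DRep (Fin.append p fun i => c * p i) a ↔
      ∃ u v : F, DRep p u ∧ DRep p v ∧ a = u + (c : F) * v := by
  constructor
  · rintro ⟨z, hz⟩
    obtain ⟨x, y, rfl⟩ := exists_append_decomp z
    rw [dQ_append, dQ_unit_smul] at hz
    exact ⟨dQ p x, dQ p y, ⟨x, rfl⟩, ⟨y, rfl⟩, hz.symm⟩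
  · rintro ⟨u, v, ⟨x, hx⟩, ⟨y, hy⟩, rfl⟩
    exact ⟨Fin.append x y, by rw [dQ_append, dQ_unit_smul, hx, hy]⟩

/-- The values of the diagonal form `p` are closed under multiplication. -/
def MulVals {n : ℕ} (p : Fin n → Fˣ) : Prop :=
  ∀ a b : F, DRep p a → DRep p b → DRep p (a * b)

lemma MulVals.div {n : ℕ} {p : Fin n → Fˣ} (hm : MulVals p) {a b : F}
    (ha : DRep p a) (hb : DRep p b) : DRep p (a / b) := by
  rw [div_eq_mul_inv]
  exact hm _ _ ha (rep_inv hb)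

/-- Pfister-style doubling: if the value set of anisotropic `p` is multiplicative and misses
`τ ≠ 0`, then `p ⟂ (-τ)·p` is again anisotropic with multiplicative value set. -/
theorem double_step {m : ℕ} {p : Fin m → Fˣ} (hani : (dQ p).Anisotropic)
    (hmul : MulVals p) {τ : F} (hτ0 : τ ≠ 0) (hτ : ¬ DRep p τ) :
    ∃ q : Fin (m + m) → Fˣ, (dQ q).Anisotropic ∧ MulVals q := by
  set c : Fˣ := Units.mk0 (-τ) (neg_ne_zero.mpr hτ0) with hc
  have hcF : (c : F) = -τ := rfl
  refine ⟨Fin.append p fun i => c * p i, ?_, ?_⟩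
  · -- anisotropic
    intro z hz
    obtain ⟨x, y, rfl⟩ := exists_append_decomp z
    rw [dQ_append, dQ_unit_smul, hcF] at hz
    have hxy : dQ p x = τ * dQ p y := by linear_combination hz
    rcases eq_or_ne (dQ p y) 0 with hy0 | hy0
    · have hy : y = 0 := hani _ hy0
      have hx : x = 0 := hani _ (by rw [hxy, hy0, mul_zero])
      rw [hx, hy, (append_eq_zero_iff (0 : Fin m → F) (0 : Fin m → F)).mpr ⟨rfl, rfl⟩]
    · exfalso
      apply hτ
      have : τ = dQ p x / dQ p y := by field_simp [hxy]; exact hxy.symm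
      rw [this]
      exact hmul.div ⟨x, rfl⟩ ⟨y, rfl⟩
  · -- multiplicative values
    intro a b ha hb
    rw [drep_double_iff] at ha hb ⊢
    obtain ⟨u₁, u₂, hu₁, hu₂, rfl⟩ := ha
    obtain ⟨w₁, w₂, hw₁, hw₂, rfl⟩ := hb
    rcases eq_or_ne u₂ 0 with rfl | hu₂0
    · refine ⟨u₁ * w₁, u₁ * w₂, hmul _ _ hu₁ hw₁, hmul _ _ hu₁ hw₂, by ring⟩
    rcases eq_or_ne u₁ 0 with rfl | hu₁0
    · refine ⟨(c : F) ^ 2 * (u₂ * w₂), u₂ * w₁,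
        rep_sq_mul _ (hmul _ _ hu₂ hw₂), hmul _ _ hu₂ hw₁, by ring⟩
    · -- both nonzero: use the magic identity
      obtain ⟨s, hs⟩ := hw₁
      have hγ : DRep p (w₂ / (u₁ * u₂)) := hmul.div hw₂ (hmul _ _ hu₁ hu₂)
      obtain ⟨t, ht⟩ := hγ
      refine ⟨u₁ * dQ p (s + ((c : F) * u₂) • t), u₂ * dQ p (s + (-u₁) • t),
        hmul _ _ hu₁ ⟨_, rfl⟩, hmul _ _ hu₂ ⟨_, rfl⟩, ?_⟩
      have key := magic p u₁ u₂ (c : F) s t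
      have : u₁ * dQ p (s + ((c:F) * u₂) • t) + (c:F) * (u₂ * dQ p (s + (-u₁) • t))
          = (u₁ + (c:F) * u₂) * w₁ + ((u₁ + (c:F) * u₂) * ((c:F) * (u₁ * u₂))) *
            (w₂ / (u₁ * u₂)) := by
        rw [← hs, ← ht]
        calc u₁ * dQ p (s + ((c:F) * u₂) • t) + (c:F) * (u₂ * dQ p (s + (-u₁) • t))
            = u₁ * dQ p (s + ((c:F) * u₂) • t) + ((c:F) * u₂) * dQ p (s + (-u₁) • t) := by ring
          _ = (u₁ + (c:F) * u₂) * dQ p s + ((u₁ + (c:F) * u₂) * ((c:F) * (u₁ * u₂))) * dQ p t := key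
      rw [this]
      have hne : u₁ * u₂ ≠ 0 := mul_ne_zero hu₁0 hu₂0
      field_simp

end Append
section Invariants

variable {F : Type*} [Field F]

lemma aniso_le_uInv {n : ℕ} (p : Fin n → Fˣ) (hp : (dQ p).Anisotropic) :
    (n : ℕ∞) ≤ uInv F :=
  le_sSup ⟨n, ⟨p, hp⟩, rfl⟩

lemma mInv_le_of_mem {n : ℕ} (hn : n ∈ AUSet F) : mInv F ≤ (n : ℕ∞) :=
  sInf_le ⟨n, hn, rfl⟩

lemma zero_uSet : ∃ p : Fin 0 → Fˣ, (dQ p).Anisotropic :=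
  ⟨Fin.elim0, fun x _ => Subsingleton.elim _ _⟩

/-- Attainment of a finite `sSup` of a set of naturals inside `ℕ∞`. -/
lemma sSup_nat_attained {S : Set ℕ} (hne : S.Nonempty)
    (htop : sSup ((↑) '' S : Set ℕ∞) ≠ ⊤) :
    ∃ u ∈ S, sSup ((↑) '' S : Set ℕ∞) = (u : ℕ∞) ∧ ∀ n ∈ S, n ≤ u := by
  obtain ⟨M, hM⟩ : ∃ M : ℕ, (M : ℕ∞) = sSup ((↑) '' S : Set ℕ∞) :=
    WithTop.ne_top_iff_exists.mp htop
  replace hM : sSup ((↑) '' S : Set ℕ∞) = (M : ℕ∞) := hM.symm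
  have hbd : ∀ n ∈ S, n ≤ M := by
    intro n hn
    have : (n : ℕ∞) ≤ (M : ℕ∞) := hM ▸ le_sSup ⟨n, hn, rfl⟩
    exact_mod_cast this
  have hfin : ((↑) '' S : Set ℕ∞).Finite :=
    Set.Finite.image _ ((Set.finite_Iic M).subset hbd)
  have hmem : sSup ((↑) '' S : Set ℕ∞) ∈ ((↑) '' S : Set ℕ∞) :=
    Set.Nonempty.csSup_mem (hne.image _) hfin
  obtain ⟨u, hu, huv⟩ := hmem
  exact ⟨u, hu, huv.symm, fun n hn => by
    have : (n : ℕ∞) ≤ (u : ℕ∞) := huv ▸ le_sSup ⟨n, hn, rfl⟩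
    exact_mod_cast this⟩

/-- If `uInv` is finite, its value lies in `AUSet`; in particular `mInv ≤ uInv`. -/
lemma uInv_mem_AUSet (htop : uInv F ≠ ⊤) :
    ∃ u : ℕ, uInv F = (u : ℕ∞) ∧ u ∈ AUSet F := by
  obtain ⟨u, hu, hval, hmax⟩ := sSup_nat_attained ⟨0, zero_uSet⟩ htop
  have hval' : uInv F = (u : ℕ∞) := hval
  obtain ⟨p, hp⟩ := hu
  refine ⟨u, hval', p, hp, ?_⟩
  intro a ha
  -- the extended form ⟨p, -a⟩ must be isotropic
  by_cases hext : (dQ (Fin.append p fun _ : Fin 1 => Units.mk0 (-a) (neg_ne_zero.mpr ha))).Anisotropic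
  · exfalso
    have : ((u + 1 : ℕ) : ℕ∞) ≤ uInv F := aniso_le_uInv _ hext
    rw [hval'] at this
    have : u + 1 ≤ u := by exact_mod_cast this
    omega
  · simp only [QuadraticMap.Anisotropic, not_forall] at hext
    obtain ⟨z, hz0, hzne⟩ := hext
    obtain ⟨x, y, rfl⟩ := exists_append_decomp z
    rw [dQ_append] at hz0
    have hyval : dQ (fun _ : Fin 1 => Units.mk0 (-a) (neg_ne_zero.mpr ha)) y = -a * (y 0 * y 0) := by
      rw [dQ_apply]
      simp [Fin.sum_univ_one]
    rcases eq_or_ne (y 0) 0 with hy0 | hy0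
    · exfalso
      have hyz : y = 0 := by
        funext i
        have : i = 0 := Subsingleton.elim _ _
        rw [this]; exact hy0
      rw [hyval, hy0] at hz0
      have hx0 : dQ p x = 0 := by linear_combination hz0
      have : x = 0 := hp _ hx0
      exact hzne (by rw [this, hyz, (append_eq_zero_iff _ _).mpr ⟨rfl, rfl⟩])
    · have hxa : dQ p x = a * (y 0 * y 0) := by
        rw [hyval] at hz0
        linear_combination hz0
      refine ⟨(y 0)⁻¹ • x, ?_⟩
      rw [QuadraticMap.map_smul, smul_eq_mul, hxa]
      field_simp

lemma mInv_le_uInv (htop : uInv F ≠ ⊤) : mInv F ≤ uInv F := by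
  obtain ⟨u, hval, hmem⟩ := uInv_mem_AUSet htop
  rw [hval]
  exact mInv_le_of_mem hmem

end Invariants
section Pow2

variable {F : Type*} [Field F]

lemma dQ_reindex {m m' : ℕ} (e : Fin m ≃ Fin m') (p : Fin m' → Fˣ) (x : Fin m → F) :
    dQ (p ∘ e) x = dQ p (x ∘ e.symm) := by
  simp only [dQ_apply, Function.comp_apply]
  exact Fintype.sum_equiv e _ _ fun i => by rw [e.symm_apply_apply]

lemma aniso_reindex {m m' : ℕ} (e : Fin m ≃ Fin m') {p : Fin m' → Fˣ}
    (hp : (dQ p).Anisotropic) : (dQ (p ∘ e)).Anisotropic := by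
  intro x hx
  rw [dQ_reindex] at hx
  have := hp _ hx
  funext i
  have := congrFun this (e i)
  simpa using this

lemma drep_reindex {m m' : ℕ} (e : Fin m ≃ Fin m') (p : Fin m' → Fˣ) (a : F) :
    DRep (p ∘ e) a ↔ DRep p a := by
  constructor
  · rintro ⟨x, hx⟩
    exact ⟨x ∘ e.symm, by rwa [dQ_reindex] at hx⟩
  · rintro ⟨x, hx⟩
    exact ⟨x ∘ e, by rw [dQ_reindex]; convert hx using 2; funext i; simp⟩

lemma mulVals_reindex {m m' : ℕ} (e : Fin m ≃ Fin m') {p : Fin m' → Fˣ}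
    (hp : MulVals p) : MulVals (p ∘ e) := by
  intro a b ha hb
  rw [drep_reindex] at ha hb ⊢
  exact hp a b ha hb

/-- Core dimension theorem: if `uInv F = d` and `d ≤ mInv F`, then `d` is a power of two. -/
theorem pow2_of_m_eq_u {d : ℕ} (hu : uInv F = (d : ℕ∞)) (hm : (d : ℕ∞) ≤ mInv F) :
    ∃ n : ℕ, d = 2 ^ n := by
  classical
  set Good : ℕ → Prop := fun i => ∃ p : Fin (2 ^ i) → Fˣ, (dQ p).Anisotropic ∧ MulVals p
    with hGood
  have good0 : Good 0 := by
    have h1 : ∃ p : Fin 1 → Fˣ, (dQ p).Anisotropic ∧ MulVals p := by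
      refine ⟨fun _ => 1, ?_, ?_⟩
      · intro x hx
        rw [dQ_apply, Fin.sum_univ_one] at hx
        simp only [Units.val_one, one_mul] at hx
        have h0 : x 0 = 0 := mul_self_eq_zero.mp hx
        funext i
        rw [Subsingleton.elim i 0]
        exact h0
      · rintro a b ⟨x, hx⟩ ⟨y, hy⟩
        refine ⟨fun _ => x 0 * y 0, ?_⟩
        rw [dQ_apply, Fin.sum_univ_one] at hx hy ⊢
        simp only [Units.val_one, one_mul] at hx hy ⊢
        rw [← hx, ← hy]; ring
    obtain ⟨p, h2, h3⟩ := h1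
    exact ⟨p ∘ finCongr (by norm_num : 2 ^ 0 = 1), aniso_reindex _ h2, mulVals_reindex _ h3⟩
  have key : ∀ i, Good i → d = 2 ^ i ∨ Good (i + 1) := by
    intro i ⟨p, hani, hmul⟩
    by_cases huniv : ∀ a : F, a ≠ 0 → DRep p a
    · left
      have h1 : mInv F ≤ ((2 ^ i : ℕ) : ℕ∞) := mInv_le_of_mem ⟨p, hani, huniv⟩
      have h2 : ((2 ^ i : ℕ) : ℕ∞) ≤ (d : ℕ∞) := hu ▸ aniso_le_uInv p hani
      have h3 : (d : ℕ∞) ≤ ((2 ^ i : ℕ) : ℕ∞) := le_trans hm h1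
      have := le_antisymm h3 h2
      exact_mod_cast this
    · right
      push_neg at huniv
      obtain ⟨τ, hτ0, hτ⟩ := huniv
      obtain ⟨q, hq1, hq2⟩ := double_step hani hmul hτ0 hτ
      have hcast : 2 ^ (i + 1) = 2 ^ i + 2 ^ i := by ring
      exact ⟨q ∘ finCongr hcast, aniso_reindex _ hq1, mulVals_reindex _ hq2⟩
  by_contra hno
  push_neg at hno
  have all : ∀ i, Good i := by
    intro i
    induction i with
    | zero => exact good0
    | succ j ih =>
      rcases key j ih with h | h
      · exact absurd h (hno j)
      · exact h
  obtain ⟨p, hani, -⟩ := all d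
  have : ((2 ^ d : ℕ) : ℕ∞) ≤ (d : ℕ∞) := hu ▸ aniso_le_uInv p hani
  have h2d : 2 ^ d ≤ d := by exact_mod_cast this
  exact absurd h2d (not_le.mpr (Nat.lt_two_pow_self (n := d)))

end Pow2
open scoped NNReal
section Lattice

lemma uS_mem_set (k : Type u) [Field k] :
    (∀ (k' : Type u) [Field k'] [Algebra k k'], FiniteDimensional k k' →
      (uInv k' : ℝ≥0∞) ≤ uS k) ∧
    (∀ (K' : Type u) [Field K'] [Algebra k K'], IsOneVarFunctionField k K' →
      (uInv K' : ℝ≥0∞) ≤ 2 * uS k) := by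
  constructor
  · intro k' _ _ hfd
    apply le_sInf
    rintro n ⟨h1, -⟩
    exact h1 k' hfd
  · intro K' _ _ hK
    have hdiv : (uInv K' : ℝ≥0∞) / 2 ≤ uS k := by
      apply le_sInf
      rintro n ⟨-, h2⟩
      rw [ENNReal.div_le_iff_le_mul (Or.inl two_ne_zero) (Or.inl ENNReal.ofNat_ne_top)]
      rw [mul_comm]
      exact h2 K' hK
    have := (ENNReal.div_le_iff_le_mul (Or.inl two_ne_zero)
      (Or.inl ENNReal.ofNat_ne_top)).mp hdiv
    rwa [mul_comm] at this

lemma mS_attained (k : Type u) [Field k] (htop : mS k ≠ ⊤) :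
    ∃ d : ℕ, mS k = (d : ℝ≥0∞) ∧
      ∀ (k' : Type u) [Field k'] [Algebra k k'], FiniteDimensional k k' →
        (d : ℕ∞) ≤ mInv k' ∧ ((2 * d : ℕ) : ℕ∞) ≤ mInv (RatFunc k') := by
  classical
  set S : Set ℕ := {n : ℕ | ∀ (k' : Type u) [Field k'] [Algebra k k'],
      FiniteDimensional k k' →
      (n : ℕ∞) ≤ mInv k' ∧ ((2 * n : ℕ) : ℕ∞) ≤ mInv (RatFunc k')} with hS
  have hSne : S.Nonempty := by
    refine ⟨0, ?_⟩
    intro k' _ _ _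
    simp
  have hmS : mS k = sSup ((fun n : ℕ => (n : ℝ≥0∞)) '' S) := rfl
  set M := (mS k).toNNReal with hMdef
  have hM : (M : ℝ≥0∞) = mS k := ENNReal.coe_toNNReal htop
  have hbd : ∀ n ∈ S, n ≤ ⌈M⌉₊ := by
    intro n hn
    have h1 : (n : ℝ≥0∞) ≤ mS k := by
      rw [hmS]
      exact le_sSup ⟨n, hn, rfl⟩
    rw [← hM] at h1
    have h2 : (n : ℝ≥0) ≤ M := by exact_mod_cast h1
    calc n = ⌈(n : ℝ≥0)⌉₊ := (Nat.ceil_natCast n).symm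
      _ ≤ ⌈M⌉₊ := Nat.ceil_mono h2
  have hfin : ((fun n : ℕ => (n : ℝ≥0∞)) '' S).Finite :=
    Set.Finite.image _ ((Set.finite_Iic ⌈M⌉₊).subset hbd)
  have hmem : mS k ∈ ((fun n : ℕ => (n : ℝ≥0∞)) '' S) := by
    rw [hmS]
    exact Set.Nonempty.csSup_mem (hSne.image _) hfin
  obtain ⟨d, hd, hdv⟩ := hmem
  exact ⟨d, hdv.symm, hd⟩

end Lattice
section FunctionField

/-- `k'(t)` is a one-variable function field over `k` when `k'/k` is finite,
and hence its `u`-invariant is bounded by `2 * uS k`. -/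
lemma uInv_ratFunc_le (k k' : Type u) [Field k] [Field k'] [Algebra k k']
    [FiniteDimensional k k'] :
    (uInv (RatFunc k') : ℝ≥0∞) ≤ 2 * uS k := by
  classical
  haveI : IsScalarTower k k' (RatFunc k') := by
    refine IsScalarTower.of_algebraMap_eq fun x => ?_
    rw [IsScalarTower.algebraMap_apply k (Polynomial k') (RatFunc k'),
      IsScalarTower.algebraMap_apply k' (Polynomial k') (RatFunc k'),
      IsScalarTower.algebraMap_apply k k' (Polynomial k')]
  set L := RatFunc k' with hL
  -- transcendence of X over k'
  have htr' : Transcendental k' (RatFunc.X : L) := by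
    rintro ⟨p, hp0, hp⟩
    rw [← RatFunc.algebraMap_X, Polynomial.aeval_algebraMap_apply,
      Polynomial.aeval_X_left_apply] at hp
    exact hp0 ((map_eq_zero_iff _ (RatFunc.algebraMap_injective k')).mp hp)
  have htr : Transcendental k (RatFunc.X : L) := by
    intro halg
    exact htr' (halg.tower_top k')
  -- finite-dimensionality over k(X)
  set E := IntermediateField.adjoin k ({RatFunc.X} : Set L) with hE
  have hXE : (RatFunc.X : L) ∈ E := IntermediateField.subset_adjoin k _ rfl
  set m := Module.finrank k k' with hm
  set b : Module.Basis (Fin m) k k' := Module.finBasis k k' with hb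
  set S : Set L := Set.range fun i : Fin m => algebraMap k' L (b i) with hSdef
  haveI : Finite ↑S := (Set.finite_range _).to_subtype
  set T := IntermediateField.adjoin (↥E) S with hT
  -- all of the image of `k'` lies in `T`
  have hk'mem : ∀ a : k', algebraMap k' L a ∈ T := by
    intro a
    have ha := Module.Basis.sum_repr b a
    have hmem : algebraMap k' L (∑ i, (b.repr a) i • b i) ∈ T := by
      rw [map_sum]
      refine Subfield.sum_mem _ fun i _ => ?_
      rw [Algebra.smul_def, map_mul, ← IsScalarTower.algebraMap_apply]
      refine mul_mem ?_ (IntermediateField.subset_adjoin _ _ ⟨i, rfl⟩)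
      have h1 : algebraMap k L ((b.repr a) i) ∈ E := IntermediateField.algebraMap_mem E _
      exact IntermediateField.algebraMap_mem T ⟨_, h1⟩
    rwa [ha] at hmem
  have hpoly : ∀ p : Polynomial k', algebraMap (Polynomial k') L p ∈ T := by
    intro p
    induction p using Polynomial.induction_on with
    | C a => rw [RatFunc.algebraMap_C]; rw [← RatFunc.algebraMap_eq_C]; exact hk'mem a
    | add p q hp hq => rw [map_add]; exact add_mem hp hq
    | monomial n a ih =>
      rw [pow_succ, ← mul_assoc, map_mul]
      refine mul_mem ih ?_
      rw [RatFunc.algebraMap_X]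
      exact IntermediateField.algebraMap_mem T ⟨_, hXE⟩
  have hTtop : T = ⊤ := by
    rw [eq_top_iff]
    intro f _
    induction f using RatFunc.induction_on with
    | f p q hq => exact div_mem (hpoly p) (hpoly q)
  have hint : ∀ x ∈ S, IsIntegral (↥E) x := by
    rintro x ⟨i, rfl⟩
    have h1 : IsIntegral k (b i) := IsIntegral.of_finite k (b i)
    have h2 : IsIntegral k (algebraMap k' L (b i)) :=
      h1.map (IsScalarTower.toAlgHom k k' L)
    exact h2.tower_top
  haveI hfd1 : FiniteDimensional (↥E) ↥T := IntermediateField.finiteDimensional_adjoin hint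
  haveI hfd : FiniteDimensional (↥E) L := by
    rw [hTtop] at hfd1
    exact (IntermediateField.topEquiv (F := ↥E) (E := L)).toLinearEquiv.finiteDimensional
  exact (uS_mem_set k).2 L ⟨RatFunc.X, htr, hfd⟩

end FunctionField

/-- If `k` has characteristic `≠ 2` and `m_s(k) = u_s(k) < ∞`, then
`m_s(k) = u_s(k) = 2 ^ n` for some `n ≥ 0`, and for every finite field extension `k'/k`:
(a) `m(k') = u(k') = 2 ^ n`, and (b) `m(k'(t)) = u(k'(t)) = 2 ^ (n + 1)`. -/
theorem stmt10 (k : Type u) [Field k] (hchar : ringChar k ≠ 2)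
    (h : mS k = uS k) (hfin : uS k ≠ ⊤) :
    ∃ n : ℕ, mS k = 2 ^ n ∧ uS k = 2 ^ n ∧
      ∀ (k' : Type u) [Field k'] [Algebra k k'], FiniteDimensional k k' →
        (mInv k' = 2 ^ n ∧ uInv k' = 2 ^ n) ∧
        (mInv (RatFunc k') = 2 ^ (n + 1) ∧ uInv (RatFunc k') = 2 ^ (n + 1)) := by
  obtain ⟨hA, hB⟩ := uS_mem_set k
  have hmtop : mS k ≠ ⊤ := by rw [h]; exact hfin
  obtain ⟨d, hd, hdT⟩ := mS_attained k hmtop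
  have huS : uS k = (d : ℝ≥0∞) := h.symm.trans hd
  -- the common value of the invariants over all finite extensions
  have main : ∀ (k' : Type u) [Field k'] [Algebra k k'], FiniteDimensional k k' →
      (mInv k' = (d : ℕ∞) ∧ uInv k' = (d : ℕ∞)) ∧
      (mInv (RatFunc k') = ((2 * d : ℕ) : ℕ∞) ∧ uInv (RatFunc k') = ((2 * d : ℕ) : ℕ∞)) := by
    intro k' _ _ hfd
    have h1 : (d : ℕ∞) ≤ mInv k' := (hdT k' hfd).1
    have h2 : (uInv k' : ℝ≥0∞) ≤ ((d : ℕ∞) : ℝ≥0∞) := by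
      have h2a := hA k' hfd
      rw [huS] at h2a
      exact_mod_cast h2a
    have h2' : uInv k' ≤ (d : ℕ∞) := by exact_mod_cast h2
    have h3 : uInv k' ≠ ⊤ := (h2'.trans_lt (WithTop.coe_lt_top d)).ne
    have h4 : mInv k' ≤ uInv k' := mInv_le_uInv h3
    have hu_eq : uInv k' = (d : ℕ∞) := le_antisymm h2' (h1.trans h4)
    have hm_eq : mInv k' = (d : ℕ∞) := le_antisymm (h4.trans h2') h1
    -- the rational function field
    have r1 : ((2 * d : ℕ) : ℕ∞) ≤ mInv (RatFunc k') := (hdT k' hfd).2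
    have r2' : uInv (RatFunc k') ≤ ((2 * d : ℕ) : ℕ∞) := by
      have r2a := uInv_ratFunc_le k k'
      rw [huS] at r2a
      have r2b : (2 : ℝ≥0∞) * (d : ℝ≥0∞) = (((2 * d : ℕ) : ℕ∞) : ℝ≥0∞) := by push_cast; ring
      rw [r2b] at r2a
      exact_mod_cast r2a
    have r3 : uInv (RatFunc k') ≠ ⊤ := (r2'.trans_lt (WithTop.coe_lt_top _)).ne
    have r4 : mInv (RatFunc k') ≤ uInv (RatFunc k') := mInv_le_uInv r3
    exact ⟨⟨hm_eq, hu_eq⟩, le_antisymm (r4.trans r2') r1,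
      le_antisymm r2' (r1.trans r4)⟩
  -- the common value is a power of two
  have hk := main k (by infer_instance)
  obtain ⟨n, hn⟩ := pow2_of_m_eq_u hk.1.2 (le_of_eq hk.1.1.symm)
  have hcast1 : ((d : ℕ∞) : ℕ∞) = (2 : ℕ∞) ^ n := by rw [hn]; push_cast; ring
  have hcast2 : ((2 * d : ℕ) : ℕ∞) = (2 : ℕ∞) ^ (n + 1) := by rw [hn]; push_cast; ring
  refine ⟨n, ?_, ?_, ?_⟩
  · rw [hd, hn]; push_cast; ring
  · rw [huS, hn]; push_cast; ring
  · intro k' _ _ hfd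
    obtain ⟨⟨hm1, hu1⟩, hr1, hr2⟩ := main k' hfd
    exact ⟨⟨by rw [hm1]; exact_mod_cast hcast1, by rw [hu1]; exact_mod_cast hcast1⟩,
      by rw [hr1]; exact_mod_cast hcast2, by rw [hr2]; exact_mod_cast hcast2⟩
end
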